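/- arXiv:1507.01337 — 3 statements merged into one kernel-verified Lean document; each statement's English description precedes it below -/
import Mathlib

section
/- Let f ∈ R[x_1,...,x_n] with Newton diagram Γ(f) equal to the simplex {α ∈ Z_{≥0}^n : α_1 + ... + α_n = 2} (equivalently, f has no constant or linear terms and its quadratic part involves all variables appropriately). If the quadratic part f_2 = f_Γ is positive definite, then every integer point of the Newton polyhedron conv Δ(f_Γ) belongs to the bisectional convex hull bconv Δ_E(f_Γ); in particular f has a regular Newton polyhedron. -/
open MvPolynomial

noncomputable section
attribute [local instance] Classical.propDecidable

/-- The real point associated to an exponent vector. -/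
def expPt {n : ℕ} (α : Fin n →₀ ℕ) : Fin n → ℝ := fun i => (α i : ℝ)

/-- `Δ(f) = ⋃_{α ∈ supp f} (α + ℝ₊ⁿ)`. -/
def DeltaSet {n : ℕ} (f : MvPolynomial (Fin n) ℝ) : Set (Fin n → ℝ) :=
  {x | ∃ α ∈ f.support, ∀ i, (α i : ℝ) ≤ x i}

/-- The Newton polyhedron `conv Δ(f)`. -/
def NewtonPolyhedron {n : ℕ} (f : MvPolynomial (Fin n) ℝ) : Set (Fin n → ℝ) :=
  convexHull ℝ (DeltaSet f)

/-- `F` is a (nonempty) face of `P`, cut out by a supporting hyperplane. -/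
def IsFaceOf {n : ℕ} (P F : Set (Fin n → ℝ)) : Prop :=
  F.Nonempty ∧ ∃ (A : Fin n → ℝ) (c : ℝ), A ≠ 0 ∧ (∀ x ∈ P, c ≤ ∑ i, A i * x i) ∧
    F = {x ∈ P | ∑ i, A i * x i = c}

/-- A compact face of `P`. -/
def IsCompactFaceOf {n : ℕ} (P F : Set (Fin n → ℝ)) : Prop := IsFaceOf P F ∧ IsCompact F

/-- The Newton diagram: the union of the compact faces of the Newton polyhedron. -/
def NewtonDiagram {n : ℕ} (f : MvPolynomial (Fin n) ℝ) : Set (Fin n → ℝ) :=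
  ⋃ F ∈ {F | IsCompactFaceOf (NewtonPolyhedron f) F}, F

/-- A maximal (compact) face of the Newton diagram of `f`. -/
def IsMaximalFace {n : ℕ} (f : MvPolynomial (Fin n) ℝ) (γ : Set (Fin n → ℝ)) : Prop :=
  IsCompactFaceOf (NewtonPolyhedron f) γ ∧
    ∀ γ', IsCompactFaceOf (NewtonPolyhedron f) γ' → γ ⊆ γ' → γ' = γ

/-- `f_γ`: the sum of the terms of `f` whose exponents lie in `γ`. -/
def facePart {n : ℕ} (f : MvPolynomial (Fin n) ℝ) (γ : Set (Fin n → ℝ)) :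
    MvPolynomial (Fin n) ℝ :=
  ∑ α ∈ f.support.filter (fun α => expPt α ∈ γ), monomial α (coeff α f)

/-- Sums of squares of polynomials supported in `(1/2)γ`, i.e. whose squared factors only
involve exponents `α` with `2α ∈ γ`. -/
def sosHalfSupported {n : ℕ} (γ : Set (Fin n → ℝ)) : Set (MvPolynomial (Fin n) ℝ) :=
  {p | ∃ l : Multiset (MvPolynomial (Fin n) ℝ),
    (∀ q ∈ l, ∀ α ∈ q.support, (2 : ℝ) • expPt α ∈ γ) ∧ p = (l.map (· ^ 2)).sum}

/-- Algebraic characterization of membership in the relative interior of a convex set `C`: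
`x ∈ C` and every segment from a point of `C` to `x` can be prolonged beyond `x` within `C`. -/
def MemRint {V : Type*} [AddCommGroup V] [Module ℝ V] (C : Set V) (x : V) : Prop :=
  x ∈ C ∧ ∀ y ∈ C, ∃ μ : ℝ, 1 < μ ∧ μ • x + (1 - μ) • y ∈ C

/-- `Δ_E(f)`: union of `α + ℝ₊ⁿ` over the even exponents `α` in the support of `f`. -/
def DeltaESet {n : ℕ} (f : MvPolynomial (Fin n) ℝ) : Set (Fin n → ℝ) :=
  {x | ∃ α ∈ f.support, (∀ i, Even (α i)) ∧ ∀ i, (α i : ℝ) ≤ x i}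

/-- `α ∈ bconv E`: `α` is a binary (dyadic) convex combination with full digits of even
integer points of `E`. -/
def MemBconv {n : ℕ} (E : Set (Fin n → ℝ)) (α : Fin n →₀ ℕ) : Prop :=
  ∃ (t N : ℕ) (A : Fin t → Fin n →₀ ℕ) (δ : Fin t → Fin N → Bool),
    0 < t ∧
    (∀ s, expPt (A s) ∈ E ∧ ∀ i, Even (A s i)) ∧
    (∀ s : Fin t, 0 < ∑ k : Fin N, (if δ s k then ((2 : ℚ) ^ (k.1 + 1))⁻¹ else 0)) ∧
    (∑ s : Fin t, ∑ k : Fin N, (if δ s k then ((2 : ℚ) ^ (k.1 + 1))⁻¹ else 0)) = 1 ∧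
    (∀ k : Fin N, ∃ s, δ s k = true) ∧
    (∀ i, (α i : ℚ) = ∑ s : Fin t,
      (∑ k : Fin N, (if δ s k then ((2 : ℚ) ^ (k.1 + 1))⁻¹ else 0)) * (A s i : ℚ))

/-- `f` has a regular Newton polyhedron: every vertex of `Γ(f)` is even with positive
coefficient, and for each maximal face `γ` every "bad" exponent of `f` inside
`conv Δ(f_γ) \ γ` lies in `bconv Δ_E(f_γ)`. -/
def RegularNewtonPolyhedron {n : ℕ} (f : MvPolynomial (Fin n) ℝ) : Prop :=
  (∀ α : Fin n →₀ ℕ, expPt α ∈ Set.extremePoints ℝ (NewtonPolyhedron f) →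
    (∀ i, Even (α i)) ∧ 0 < coeff α f) ∧
  (∀ γ, IsMaximalFace f γ → ∀ α ∈ f.support,
    expPt α ∈ convexHull ℝ (DeltaSet (facePart f γ)) → expPt α ∉ γ →
    ((¬ ∀ i, Even (α i)) ∨ coeff α f < 0) →
    MemBconv (DeltaESet (facePart f γ)) α)




lemma coeff_facePart {n : ℕ} (f : MvPolynomial (Fin n) ℝ) (γ : Set (Fin n → ℝ))
    (β : Fin n →₀ ℕ) :
    coeff β (facePart f γ) =
      if β ∈ f.support.filter (fun α => expPt α ∈ γ) then coeff β f else 0 := by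
  rw [facePart, coeff_sum]
  have : ∀ b ∈ f.support.filter (fun α => expPt α ∈ γ),
      coeff β (monomial b (coeff b f)) = if b = β then coeff β f else 0 := by
    intro b _
    rw [coeff_monomial]
    by_cases h : b = β
    · simp [h]
    · simp [h]
  rw [Finset.sum_congr rfl this, Finset.sum_ite_eq']

lemma support_facePart {n : ℕ} (f : MvPolynomial (Fin n) ℝ) (γ : Set (Fin n → ℝ)) :
    (facePart f γ).support ⊆ f.support.filter (fun α => expPt α ∈ γ) := by
  intro β hβ
  rw [mem_support_iff, coeff_facePart] at hβ
  by_contra h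
  rw [if_neg h] at hβ
  exact hβ rfl

lemma mem_support_facePart {n : ℕ} (f : MvPolynomial (Fin n) ℝ) (γ : Set (Fin n → ℝ))
    {β : Fin n →₀ ℕ} (h1 : coeff β f ≠ 0) (h2 : expPt β ∈ γ) :
    β ∈ (facePart f γ).support := by
  rw [mem_support_iff, coeff_facePart,
    if_pos (Finset.mem_filter.2 ⟨mem_support_iff.2 h1, h2⟩)]
  exact h1



def simplex2 (n : ℕ) : Set (Fin n → ℝ) := {x : Fin n → ℝ | (∀ i, 0 ≤ x i) ∧ ∑ i, x i = 2}

lemma eval_facePart {n : ℕ} (f : MvPolynomial (Fin n) ℝ) (γ : Set (Fin n → ℝ))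
    (x : Fin n → ℝ) :
    eval x (facePart f γ) =
      ∑ α ∈ f.support.filter (fun α => expPt α ∈ γ), coeff α f * ∏ j, x j ^ α j := by
  rw [facePart, map_sum]
  refine Finset.sum_congr rfl fun α _ => ?_
  rw [eval_monomial, Finsupp.prod_pow]

lemma expPt_single_mem {n : ℕ} (i : Fin n) : expPt (Finsupp.single i 2) ∈ simplex2 n := by
  constructor
  · intro j; simp [expPt]
  · show ∑ j, ((Finsupp.single i 2 : Fin n →₀ ℕ) j : ℝ) = 2
    rw [Finset.sum_eq_single i]
    · simp
    · intro b _ hb; simp [Finsupp.single_apply, Ne.symm hb]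
    · intro h; exact absurd (Finset.mem_univ i) h

lemma degree_two_of_mem {n : ℕ} {α : Fin n →₀ ℕ} (h : expPt α ∈ simplex2 n) :
    ∑ j, α j = 2 := by
  have h2 : ((∑ j, α j : ℕ) : ℝ) = 2 := by push_cast; exact h.2
  exact_mod_cast h2

lemma single_eq_of {n : ℕ} {α : Fin n →₀ ℕ} {i : Fin n} (hd : ∑ j, α j = 2)
    (hz : ∀ j, j ≠ i → α j = 0) : α = Finsupp.single i 2 := by
  have : ∑ j, α j = α i := Finset.sum_eq_single i (fun b _ hb => hz b hb)
    (fun h => absurd (Finset.mem_univ i) h)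
  ext j
  rcases eq_or_ne j i with rfl | hj
  · simp [← hd, this]
  · simp [Finsupp.single_apply, Ne.symm hj, hz j hj]

lemma coeff_single_two_pos {n : ℕ} (f : MvPolynomial (Fin n) ℝ)
    (hpd : ∀ x : Fin n → ℝ, x ≠ 0 → 0 < eval x (facePart f (simplex2 n)))
    (i : Fin n) : 0 < coeff (Finsupp.single i 2) f := by
  set u : Fin n → ℝ := fun j => if j = i then 1 else 0 with hu
  have hune : u ≠ 0 := by
    intro h
    have := congrFun h i
    simp [hu] at this
  have h := hpd u hune
  rw [eval_facePart] at h
  rw [Finset.sum_eq_single (Finsupp.single i 2)] at h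
  · have : ∏ j, u j ^ (Finsupp.single i 2 : Fin n →₀ ℕ) j = 1 := by
      apply Finset.prod_eq_one
      intro j _
      rcases eq_or_ne j i with rfl | hj
      · simp [hu]
      · simp [hu, hj, Finsupp.single_apply, Ne.symm hj]
    rwa [this, mul_one] at h
  · intro β hβ hne
    rw [Finset.mem_filter] at hβ
    have hd : ∑ j, β j = 2 := degree_two_of_mem hβ.2
    have : ∃ j, j ≠ i ∧ β j ≠ 0 := by
      by_contra hc
      push_neg at hc
      exact hne (single_eq_of hd (fun j hj => hc j hj))
    obtain ⟨j, hj, hbj⟩ := this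
    have : u j ^ β j = 0 := by
      rw [hu]
      simp only [if_neg hj]
      exact zero_pow hbj
    rw [Finset.prod_eq_zero (Finset.mem_univ j) this, mul_zero]
  · intro hβ
    have : coeff (Finsupp.single i 2) f = 0 := by
      by_contra hc
      exact hβ (Finset.mem_filter.2 ⟨mem_support_iff.2 hc, expPt_single_mem i⟩)
    rw [this, zero_mul]


lemma even_decomp {n : ℕ} (α : Fin n →₀ ℕ) (h2 : 2 ≤ ∑ j, α j) :
    ∃ g₁ g₂ : Fin n → ℕ, (∀ j, Even (g₁ j)) ∧ (∀ j, Even (g₂ j)) ∧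
      (∃ i, g₁ i ≠ 0) ∧ (∃ i, g₂ i ≠ 0) ∧ ∀ j, g₁ j + g₂ j = 2 * α j := by
  by_cases hall : ∀ j, Even (α j)
  · refine ⟨α, α, hall, hall, ?_, ?_, fun j => by ring⟩ <;>
    · by_contra hc
      push_neg at hc
      have : ∑ j, α j = 0 := Finset.sum_eq_zero (fun j _ => hc j)
      omega
  · push_neg at hall
    obtain ⟨i₀, hi₀⟩ := hall
    have hodd : Odd (α i₀) := Nat.not_even_iff_odd.1 hi₀
    have heven_sub : ∀ j, ¬ Even (α j) → Even (α j - 1) := by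
      intro j he
      obtain ⟨k, hk⟩ := Nat.not_even_iff_odd.1 he
      have : α j - 1 = 2 * k := by omega
      rw [this]
      exact even_two_mul k
    have heven_add : ∀ j, ¬ Even (α j) → Even (α j + 1) := by
      intro j he
      obtain ⟨k, hk⟩ := Nat.not_even_iff_odd.1 he
      have : α j + 1 = 2 * (k + 1) := by omega
      rw [this]
      exact even_two_mul _
    refine ⟨fun j => if j = i₀ then α j + 1 else if Even (α j) then α j else α j - 1,
      fun j => if j = i₀ then α j - 1 else if Even (α j) then α j else α j + 1,
      ?_, ?_, ⟨i₀, by simp⟩, ?_, ?_⟩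
    · intro j
      rcases eq_or_ne j i₀ with rfl | hj
      · simpa using heven_add j hi₀
      · simp only [if_neg hj]
        by_cases he : Even (α j)
        · simpa [he]
        · simpa [he] using heven_sub j he
    · intro j
      rcases eq_or_ne j i₀ with rfl | hj
      · simpa using heven_sub j hi₀
      · simp only [if_neg hj]
        by_cases he : Even (α j)
        · simpa [he]
        · simpa [he] using heven_add j he
    · by_cases hz : ∀ j, j ≠ i₀ → α j = 0
      · have hsum : ∑ j, α j = α i₀ := Finset.sum_eq_single i₀ (fun b _ hb => hz b hb)
          (fun h => absurd (Finset.mem_univ i₀) h)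
        refine ⟨i₀, ?_⟩
        have hge : 2 ≤ α i₀ := hsum ▸ h2
        simp only [eq_self_iff_true, if_true]
        omega
      · push_neg at hz
        obtain ⟨j, hj, hαj⟩ := hz
        refine ⟨j, ?_⟩
        simp only [if_neg hj]
        by_cases he : Even (α j) <;> simp [he] <;> omega
    · intro j
      obtain ⟨k, hk⟩ := hodd
      rcases eq_or_ne j i₀ with rfl | hj
      · simp; omega
      · simp only [if_neg hj]
        by_cases he : Even (α j)
        · simp [he]; ring
        · obtain ⟨m, hm⟩ := Nat.not_even_iff_odd.1 he
          simp [he]; omega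

lemma apply_symm {n : ℕ} (g : Fin n → ℕ) (j : Fin n) :
    (Finsupp.equivFunOnFinite.symm g) j = g j := rfl

lemma mem_DeltaESet_of {n : ℕ} (p : MvPolynomial (Fin n) ℝ)
    (hsupp : ∀ i : Fin n, Finsupp.single i 2 ∈ p.support)
    {g : Fin n → ℕ} (heven : ∀ j, Even (g j)) (hne : ∃ i, g i ≠ 0) :
    expPt (Finsupp.equivFunOnFinite.symm g) ∈ DeltaESet p := by
  obtain ⟨i, hi⟩ := hne
  have h2 : 2 ≤ g i := by
    obtain ⟨k, hk⟩ := heven i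
    omega
  refine ⟨Finsupp.single i 2, hsupp i, ?_, ?_⟩
  · intro j
    rcases eq_or_ne j i with rfl | hj
    · simp
    · simp [Finsupp.single_apply, Ne.symm hj]
  · intro j
    show (((Finsupp.single i 2 : Fin n →₀ ℕ) j : ℕ) : ℝ) ≤ ((g j : ℕ) : ℝ)
    rcases eq_or_ne j i with rfl | hj
    · simp only [Finsupp.single_eq_same]
      exact_mod_cast h2
    · simp [Finsupp.single_apply, Ne.symm hj]

lemma memBconv_of_deg2 {n : ℕ} (p : MvPolynomial (Fin n) ℝ)
    (hsupp : ∀ i : Fin n, Finsupp.single i 2 ∈ p.support)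
    (α : Fin n →₀ ℕ) (h2 : 2 ≤ ∑ j, α j) : MemBconv (DeltaESet p) α := by
  obtain ⟨g₁, g₂, he₁, he₂, hn₁, hn₂, hsum⟩ := even_decomp α h2
  refine ⟨2, 1, fun s => Finsupp.equivFunOnFinite.symm (if s = 0 then g₁ else g₂),
    fun _ _ => true, two_pos, ?_, ?_, ?_, fun k => ⟨0, rfl⟩, ?_⟩
  · intro s
    constructor
    · by_cases hs : s = 0
      · simpa [hs] using mem_DeltaESet_of p hsupp he₁ hn₁
      · simpa [hs] using mem_DeltaESet_of p hsupp he₂ hn₂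
    · intro i
      rw [apply_symm]
      by_cases hs : s = 0 <;> simp [hs, he₁ i, he₂ i]
  · intro s
    simp [Fin.sum_univ_one]
  · simp [Fin.sum_univ_two, Fin.sum_univ_one]
  · intro i
    have hc : (g₁ i : ℚ) + (g₂ i : ℚ) = 2 * (α i : ℚ) := by exact_mod_cast hsum i
    simp only [Fin.sum_univ_two, Fin.sum_univ_one, apply_symm]
    norm_num
    linarith

def Kset (n : ℕ) : Set (Fin n → ℝ) := {x | (∀ i, 0 ≤ x i) ∧ 2 ≤ ∑ i, x i}

lemma convex_Kset (n : ℕ) : Convex ℝ (Kset n) := by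
  intro x hx y hy a b ha hb hab
  constructor
  · intro i
    have := hx.1 i
    have := hy.1 i
    simp only [Pi.add_apply, Pi.smul_apply, smul_eq_mul]
    nlinarith
  · have hxs := hx.2
    have hys := hy.2
    have : ∑ i, (a • x + b • y) i = a * ∑ i, x i + b * ∑ i, y i := by
      simp only [Pi.add_apply, Pi.smul_apply, smul_eq_mul]
      rw [Finset.mul_sum, Finset.mul_sum, ← Finset.sum_add_distrib]
    rw [this]
    nlinarith

lemma deltaSet_subset_Kset {n : ℕ} (f : MvPolynomial (Fin n) ℝ) :
    DeltaSet (facePart f (simplex2 n)) ⊆ Kset n := by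
  rintro x ⟨β, hβ, hle⟩
  have hβ' := support_facePart f (simplex2 n) hβ
  rw [Finset.mem_filter] at hβ'
  have hS := hβ'.2
  constructor
  · intro i
    exact le_trans (Nat.cast_nonneg _) (hle i)
  · calc (2:ℝ) = ∑ i, (β i : ℝ) := hS.2.symm
    _ ≤ ∑ i, x i := Finset.sum_le_sum (fun i _ => hle i)

lemma deg_ge_two_of_mem_hull {n : ℕ} (f : MvPolynomial (Fin n) ℝ) (α : Fin n →₀ ℕ)
    (h : expPt α ∈ convexHull ℝ (DeltaSet (facePart f (simplex2 n)))) :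
    2 ≤ ∑ j, α j := by
  have hK : expPt α ∈ Kset n :=
    convexHull_min (deltaSet_subset_Kset f) (convex_Kset n) h
  have : (2:ℝ) ≤ ∑ j, (α j : ℝ) := hK.2
  have h2 : (2:ℝ) ≤ ((∑ j, α j : ℕ) : ℝ) := by push_cast; exact this
  exact_mod_cast h2

lemma part1 {n : ℕ} (f : MvPolynomial (Fin n) ℝ)
    (hpd : ∀ x : Fin n → ℝ, x ≠ 0 → 0 < eval x (facePart f (simplex2 n))) :
    ∀ α : Fin n →₀ ℕ, expPt α ∈ convexHull ℝ (DeltaSet (facePart f (simplex2 n))) →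
      MemBconv (DeltaESet (facePart f (simplex2 n))) α := by
  intro α hα
  have hsupp : ∀ i : Fin n, Finsupp.single i 2 ∈ (facePart f (simplex2 n)).support :=
    fun i => mem_support_facePart f _ (ne_of_gt (coeff_single_two_pos f hpd i))
      (expPt_single_mem i)
  exact memBconv_of_deg2 _ hsupp α (deg_ge_two_of_mem_hull f α hα)


lemma convex_sum_ge {n : ℕ} (c : ℝ) : Convex ℝ {x : Fin n → ℝ | c ≤ ∑ i, x i} := by
  intro x hx y hy a b ha hb hab
  have hsum : ∑ i, (a • x + b • y) i = a * ∑ i, x i + b * ∑ i, y i := by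
    simp only [Pi.add_apply, Pi.smul_apply, smul_eq_mul]
    rw [Finset.mul_sum, Finset.mul_sum, ← Finset.sum_add_distrib]
  show c ≤ ∑ i, (a • x + b • y) i
  rw [hsum]
  have hx' : c ≤ ∑ i, x i := hx
  have hy' : c ≤ ∑ i, y i := hy
  have h1 : a * c ≤ a * ∑ i, x i := mul_le_mul_of_nonneg_left hx' ha
  have h2 : b * c ≤ b * ∑ i, y i := mul_le_mul_of_nonneg_left hy' hb
  have h3 : a * c + b * c = c := by rw [← add_mul, hab, one_mul]
  linarith

lemma convex_nonneg_orthant (n : ℕ) : Convex ℝ {x : Fin n → ℝ | ∀ i, 0 ≤ x i} := by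
  intro x hx y hy a b ha hb hab i
  have := hx i
  have := hy i
  simp only [Pi.add_apply, Pi.smul_apply, smul_eq_mul]
  nlinarith

lemma poly_sum_ge {n : ℕ} (f : MvPolynomial (Fin n) ℝ) (c : ℝ)
    (hc : ∀ β ∈ f.support, c ≤ ∑ j, (β j : ℝ)) :
    ∀ x ∈ NewtonPolyhedron f, c ≤ ∑ i, x i := by
  intro x hx
  refine convexHull_min ?_ (convex_sum_ge c) hx
  rintro y ⟨β, hβ, hle⟩
  calc c ≤ ∑ j, (β j : ℝ) := hc β hβ
  _ ≤ ∑ j, y j := Finset.sum_le_sum (fun j _ => hle j)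

lemma poly_nonneg {n : ℕ} (f : MvPolynomial (Fin n) ℝ) :
    ∀ x ∈ NewtonPolyhedron f, ∀ i, 0 ≤ x i := by
  intro x hx
  refine convexHull_min ?_ (convex_nonneg_orthant n) hx
  rintro y ⟨β, hβ, hle⟩ i
  exact le_trans (Nat.cast_nonneg _) (hle i)

/-- The sublevel face of the Newton polyhedron is the convex hull of the exponents
attaining the minimum. -/
lemma face_eq_hull {n : ℕ} (f : MvPolynomial (Fin n) ℝ) (c : ℝ)
    (hc : ∀ β ∈ f.support, c ≤ ∑ j, (β j : ℝ)) :
    {x ∈ NewtonPolyhedron f | ∑ i, x i = c} =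
      convexHull ℝ (expPt '' {β : Fin n →₀ ℕ | β ∈ f.support ∧ ∑ j, (β j : ℝ) = c}) := by
  apply Set.Subset.antisymm
  · rintro x ⟨hxP, hxc⟩
    rw [NewtonPolyhedron, convexHull_eq] at hxP
    obtain ⟨ι, t, w, z, hw, hw1, hz, hcm⟩ := hxP
    have hLz : ∀ i ∈ t, c ≤ ∑ j, z i j := by
      intro i hi
      obtain ⟨β, hβ, hle⟩ := hz i hi
      calc c ≤ ∑ j, (β j : ℝ) := hc β hβ
      _ ≤ ∑ j, z i j := Finset.sum_le_sum (fun j _ => hle j)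
    have hxsum : ∑ i ∈ t, w i * (∑ j, z i j) = c := by
      have h1 : x = ∑ i ∈ t, w i • z i := by
        rw [← hcm, Finset.centerMass_eq_of_sum_1 t z hw1]
      have h2 : ∑ j, x j = ∑ i ∈ t, w i * (∑ j, z i j) := by
        rw [h1]
        have hsw : ∑ j, (∑ i ∈ t, w i • z i) j = ∑ j, ∑ i ∈ t, w i * z i j := by
          refine Finset.sum_congr rfl fun j _ => ?_
          rw [Finset.sum_apply]
          exact Finset.sum_congr rfl fun i _ => rfl
        rw [hsw, Finset.sum_comm]
        exact Finset.sum_congr rfl fun i _ => (Finset.mul_sum _ _ _).symm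
      rw [← h2, hxc]
    have hzero : ∀ i ∈ t, w i * ((∑ j, z i j) - c) = 0 := by
      have hnn : ∀ i ∈ t, 0 ≤ w i * ((∑ j, z i j) - c) :=
        fun i hi => mul_nonneg (hw i hi) (by linarith [hLz i hi])
      have hsum0 : ∑ i ∈ t, w i * ((∑ j, z i j) - c) = 0 := by
        have : ∑ i ∈ t, w i * ((∑ j, z i j) - c) =
            (∑ i ∈ t, w i * (∑ j, z i j)) - (∑ i ∈ t, w i) * c := by
          rw [Finset.sum_mul, ← Finset.sum_sub_distrib]
          refine Finset.sum_congr rfl fun i _ => by ring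
        rw [this, hxsum, hw1, one_mul, sub_self]
      exact (Finset.sum_eq_zero_iff_of_nonneg hnn).1 hsum0
    have hmem : ∀ i ∈ t, w i ≠ 0 →
        z i ∈ expPt '' {β : Fin n →₀ ℕ | β ∈ f.support ∧ ∑ j, (β j : ℝ) = c} := by
      intro i hi hwi
      have hLzi : ∑ j, z i j = c := by
        have := hzero i hi
        rcases mul_eq_zero.1 this with h | h
        · exact absurd h hwi
        · linarith
      obtain ⟨β, hβ, hle⟩ := hz i hi
      have hβc : ∑ j, (β j : ℝ) = c := le_antisymm (by
          calc ∑ j, (β j : ℝ) ≤ ∑ j, z i j := Finset.sum_le_sum (fun j _ => hle j)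
          _ = c := hLzi) (hc β hβ)
      have hzi : z i = expPt β := by
        have hdiff : ∀ j ∈ Finset.univ, z i j - (β j : ℝ) = 0 := by
          apply (Finset.sum_eq_zero_iff_of_nonneg (fun j _ => by linarith [hle j])).1
          rw [Finset.sum_sub_distrib, hLzi, hβc, sub_self]
        funext j
        have := hdiff j (Finset.mem_univ j)
        show z i j = (β j : ℝ)
        linarith
      exact ⟨β, ⟨hβ, hβc⟩, hzi.symm⟩
    rw [← hcm, ← Finset.centerMass_filter_ne_zero z]
    apply Finset.centerMass_mem_convexHull
    · intro i hi
      exact hw i (Finset.mem_filter.1 hi).1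
    · rw [Finset.sum_filter_ne_zero, hw1]
      norm_num
    · intro i hi
      rw [Finset.mem_filter] at hi
      exact hmem i hi.1 hi.2
  · apply convexHull_min
    · rintro y ⟨β, ⟨hβ, hβc⟩, rfl⟩
      exact ⟨subset_convexHull ℝ _ ⟨β, hβ, fun j => le_refl _⟩, hβc⟩
    · intro x hx y hy a b ha hb hab
      refine ⟨(convex_convexHull ℝ _) hx.1 hy.1 ha hb hab, ?_⟩
      have hsum : ∑ i, (a • x + b • y) i = a * ∑ i, x i + b * ∑ i, y i := by
        simp only [Pi.add_apply, Pi.smul_apply, smul_eq_mul]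
        rw [Finset.mul_sum, Finset.mul_sum, ← Finset.sum_add_distrib]
      rw [hsum, hx.2, hy.2, ← add_mul, hab, one_mul]


lemma compact_min_face {n : ℕ} (f : MvPolynomial (Fin n) ℝ) (c : ℝ)
    (hc : ∀ β ∈ f.support, c ≤ ∑ j, (β j : ℝ)) :
    IsCompact {x ∈ NewtonPolyhedron f | ∑ i, (1:ℝ) * x i = c} := by
  have hsetEq : {x ∈ NewtonPolyhedron f | ∑ i, (1:ℝ) * x i = c} =
      {x ∈ NewtonPolyhedron f | ∑ i, x i = c} := by
    ext x
    simp only [Set.mem_setOf_eq, one_mul]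
  rw [hsetEq, face_eq_hull f c hc]
  exact Set.Finite.isCompact_convexHull (𝕜 := ℝ)
    ((f.support.finite_toSet.subset (fun β hβ => hβ.1)).image expPt)

lemma min_deg_two {n : ℕ} (f : MvPolynomial (Fin n) ℝ) (hn : 0 < n)
    (hΓ : NewtonDiagram f = simplex2 n) (hne : f.support.Nonempty) :
    ∀ β ∈ f.support, 2 ≤ ∑ j, β j := by
  classical
  set I := f.support.image (fun β => ∑ j, β j) with hI
  have hIne : I.Nonempty := hne.image _
  set M := I.min' hIne with hM
  obtain ⟨β₀, hβ₀, hβ₀M⟩ := Finset.mem_image.1 (I.min'_mem hIne)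
  have hminN : ∀ β ∈ f.support, M ≤ ∑ j, β j :=
    fun β hβ => Finset.min'_le I _ (Finset.mem_image_of_mem _ hβ)
  have hmin : ∀ β ∈ f.support, (M:ℝ) ≤ ∑ j, (β j : ℝ) := by
    intro β hβ
    calc (M:ℝ) ≤ ((∑ j, β j : ℕ):ℝ) := by exact_mod_cast hminN β hβ
    _ = ∑ j, (β j:ℝ) := by push_cast; rfl
  have hβ₀P : expPt β₀ ∈ NewtonPolyhedron f :=
    subset_convexHull ℝ _ ⟨β₀, hβ₀, fun j => le_refl _⟩
  have hβ₀sum : ∑ i, expPt β₀ i = (M:ℝ) := by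
    rw [hM, ← hβ₀M]
    push_cast
    rfl
  have hcf : IsCompactFaceOf (NewtonPolyhedron f)
      {x ∈ NewtonPolyhedron f | ∑ i, (1:ℝ) * x i = (M:ℝ)} := by
    refine ⟨⟨⟨expPt β₀, hβ₀P, by simpa using hβ₀sum⟩, fun _ => (1:ℝ), (M:ℝ), ?_, ?_, rfl⟩, ?_⟩
    · intro h
      have := congrFun h ⟨0, hn⟩
      norm_num at this
    · intro x hx
      simpa using poly_sum_ge f (M:ℝ) hmin x hx
    · exact compact_min_face f (M:ℝ) hmin
  have hmem : expPt β₀ ∈ NewtonDiagram f :=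
    Set.mem_iUnion₂.2 ⟨_, hcf, ⟨hβ₀P, by simpa using hβ₀sum⟩⟩
  rw [hΓ] at hmem
  have h2 : ∑ i, expPt β₀ i = 2 := hmem.2
  have hM2 : M = 2 := by
    have : (M:ℝ) = 2 := by rw [← hβ₀sum, h2]
    exact_mod_cast this
  intro β hβ
  rw [← hM2]
  exact hminN β hβ

lemma Kset_subset_poly {n : ℕ} (f : MvPolynomial (Fin n) ℝ)
    (hs : ∀ i : Fin n, Finsupp.single i 2 ∈ f.support) :
    Kset n ⊆ NewtonPolyhedron f := by
  rintro x ⟨hx0, hx2⟩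
  set S₀ := ∑ i, x i with hS₀
  have hS₀pos : 0 < S₀ := by linarith
  set z : Fin n → Fin n → ℝ := fun i j => if j = i then S₀ else 0 with hzdef
  have hz : ∀ i : Fin n, z i ∈ DeltaSet f := by
    intro i
    refine ⟨Finsupp.single i 2, hs i, fun j => ?_⟩
    rcases eq_or_ne j i with rfl | hj
    · simp [hzdef]; linarith
    · simp [hzdef, Finsupp.single_apply, Ne.symm hj, hj]
  have hcm : Finset.univ.centerMass x z ∈ convexHull ℝ (DeltaSet f) :=
    Finset.centerMass_mem_convexHull Finset.univ (fun i _ => hx0 i)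
      hS₀pos (fun i _ => hz i)
  have hxeq : Finset.univ.centerMass x z = x := by
    rw [Finset.centerMass]
    funext j
    simp only [Pi.smul_apply, smul_eq_mul, Finset.sum_apply]
    have : ∑ i, x i * z i j = x j * S₀ := by
      rw [hzdef]
      simp only
      have : ∀ i, x i * (if j = i then S₀ else 0) = if j = i then x i * S₀ else 0 := by
        intro i
        split <;> simp
      rw [Finset.sum_congr rfl (fun i _ => this i), Finset.sum_ite_eq]
      simp
    rw [this, ← hS₀]
    field_simp
  rw [← hxeq]
  exact hcm

lemma simplex_is_face {n : ℕ} (f : MvPolynomial (Fin n) ℝ) (hn : 0 < n)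
    (hΓ : NewtonDiagram f = simplex2 n)
    (hs : ∀ i : Fin n, Finsupp.single i 2 ∈ f.support) :
    IsCompactFaceOf (NewtonPolyhedron f) (simplex2 n) := by
  have hne : f.support.Nonempty := ⟨_, hs ⟨0, hn⟩⟩
  have hmin := min_deg_two f hn hΓ hne
  have hminR : ∀ β ∈ f.support, (2:ℝ) ≤ ∑ j, (β j : ℝ) := by
    intro β hβ
    calc (2:ℝ) ≤ ((∑ j, β j : ℕ):ℝ) := by exact_mod_cast hmin β hβ
    _ = ∑ j, (β j:ℝ) := by push_cast; rfl
  have hEq : {x ∈ NewtonPolyhedron f | ∑ i, (1:ℝ) * x i = 2} = simplex2 n := by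
    ext x
    simp only [Set.mem_setOf_eq, one_mul]
    constructor
    · rintro ⟨hxP, hxs⟩
      exact ⟨poly_nonneg f x hxP, hxs⟩
    · rintro ⟨hx0, hx2⟩
      exact ⟨Kset_subset_poly f hs ⟨hx0, le_of_eq hx2.symm⟩, hx2⟩
  refine ⟨⟨⟨expPt (Finsupp.single ⟨0, hn⟩ 2), expPt_single_mem _⟩,
    fun _ => (1:ℝ), 2, ?_, ?_, hEq.symm⟩, ?_⟩
  · intro h
    have := congrFun h ⟨0, hn⟩
    norm_num at this
  · intro x hx
    simpa using poly_sum_ge f 2 hminR x hx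
  · rw [← hEq]
    exact compact_min_face f 2 hminR

lemma maximal_eq_simplex {n : ℕ} (f : MvPolynomial (Fin n) ℝ) (hn : 0 < n)
    (hΓ : NewtonDiagram f = simplex2 n)
    (hs : ∀ i : Fin n, Finsupp.single i 2 ∈ f.support)
    {γ : Set (Fin n → ℝ)} (hγ : IsMaximalFace f γ) : γ = simplex2 n := by
  have hsub : γ ⊆ NewtonDiagram f := fun x hx => Set.mem_iUnion₂.2 ⟨γ, hγ.1, hx⟩
  rw [hΓ] at hsub
  exact (hγ.2 (simplex2 n) (simplex_is_face f hn hΓ hs) hsub).symm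


lemma sum_smul_apply {n : ℕ} (c : ℝ) (x : Fin n → ℝ) : ∑ i, (c • x) i = c * ∑ i, x i := by
  simp only [Pi.smul_apply, smul_eq_mul]
  rw [Finset.mul_sum]

lemma extreme_eq_single {n : ℕ} (f : MvPolynomial (Fin n) ℝ) (hn : 0 < n)
    (hΓ : NewtonDiagram f = simplex2 n)
    (hs : ∀ i : Fin n, Finsupp.single i 2 ∈ f.support)
    (α : Fin n →₀ ℕ) (hx : expPt α ∈ Set.extremePoints ℝ (NewtonPolyhedron f)) :
    ∃ i, α = Finsupp.single i 2 := by
  set x := expPt α with hxdef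
  have hxΔ : x ∈ DeltaSet f := extremePoints_convexHull_subset hx
  obtain ⟨β, hβ, hle⟩ := hxΔ
  have hmin := min_deg_two f hn hΓ ⟨_, hs ⟨0, hn⟩⟩
  have hx0 : ∀ i, 0 ≤ x i := fun i => le_trans (Nat.cast_nonneg _) (hle i)
  have hx2 : 2 ≤ ∑ i, x i := by
    have h1 : (2:ℝ) ≤ ∑ j, (β j : ℝ) := by
      calc (2:ℝ) ≤ ((∑ j, β j : ℕ):ℝ) := by exact_mod_cast hmin β hβ
      _ = ∑ j, (β j:ℝ) := by push_cast; rfl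
    calc (2:ℝ) ≤ ∑ j, (β j : ℝ) := h1
    _ ≤ ∑ i, x i := Finset.sum_le_sum (fun j _ => hle j)
  have hKP : Kset n ⊆ NewtonPolyhedron f := Kset_subset_poly f hs
  rw [mem_extremePoints] at hx
  have hExt : ∀ y ∈ Kset n, ∀ z ∈ Kset n, x ∈ openSegment ℝ y z → y = x ∧ z = x :=
    fun y hy z hz hseg => hx.2 y (hKP hy) z (hKP hz) hseg
  have hx_ne : x ≠ 0 := by
    intro h0
    rw [h0] at hx2
    simp at hx2
    linarith
  have hsum2 : ∑ i, x i = 2 := by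
    by_contra hne2
    have hgt : 2 < ∑ i, x i := lt_of_le_of_ne hx2 (Ne.symm hne2)
    set S₀ := ∑ i, x i with hS₀def
    have hS₀pos : (0:ℝ) < S₀ := by linarith
    set t := (S₀ - 2) / (2 * S₀) with htdef
    have htpos : 0 < t := div_pos (by linarith) (by linarith)
    have htlt : t < 1 := by
      rw [htdef, div_lt_one (by linarith)]
      linarith
    have htS : t * S₀ = (S₀ - 2) / 2 := by
      rw [htdef]
      field_simp
    have hy : (1 - t) • x ∈ Kset n := by
      constructor
      · intro i
        simp only [Pi.smul_apply, smul_eq_mul]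
        exact mul_nonneg (by linarith) (hx0 i)
      · rw [sum_smul_apply, ← hS₀def]
        nlinarith
    have hz : (1 + t) • x ∈ Kset n := by
      constructor
      · intro i
        simp only [Pi.smul_apply, smul_eq_mul]
        exact mul_nonneg (by linarith) (hx0 i)
      · rw [sum_smul_apply, ← hS₀def]
        nlinarith
    have hseg : x ∈ openSegment ℝ ((1 - t) • x) ((1 + t) • x) := by
      refine ⟨1/2, 1/2, by norm_num, by norm_num, by norm_num, ?_⟩
      rw [smul_smul, smul_smul, ← add_smul]
      have : (1/2:ℝ) * (1 - t) + 1/2 * (1 + t) = 1 := by ring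
      rw [this, one_smul]
    have heq := (hExt _ hy _ hz hseg).1
    have : (-t) • x = 0 := by
      have h1 : (1 - t) • x - (1:ℝ) • x = 0 := by rw [one_smul, heq, sub_self]
      rw [← sub_smul] at h1
      convert h1 using 2
      ring
    rcases smul_eq_zero.1 this with h | h
    · exact absurd h (by intro hh; rw [neg_eq_zero] at hh; linarith)
    · exact hx_ne h
  have hupos : ∃ i, 0 < x i := by
    by_contra hc
    push_neg at hc
    have : ∀ i, x i = 0 := fun i => le_antisymm (hc i) (hx0 i)
    have : ∑ i, x i = 0 := Finset.sum_eq_zero (fun i _ => this i)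
    linarith
  obtain ⟨i, hipos⟩ := hupos
  have huniq : ∀ k, k ≠ i → x k = 0 := by
    intro k hk
    by_contra hkne
    have hkpos : 0 < x k := lt_of_le_of_ne (hx0 k) (Ne.symm hkne)
    set t := min (x i) (x k) with htdef
    have htpos : 0 < t := lt_min hipos hkpos
    set d : Fin n → ℝ := fun m => if m = i then t else if m = k then -t else 0 with hddef
    have hd_sum : ∑ m, d m = 0 := by
      have hsplit : ∀ m, d m = (if m = i then t else 0) + (if m = k then -t else 0) := by
        intro m
        by_cases h1 : m = i
        · subst h1
          simp [hddef, Ne.symm hk]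
        · by_cases h2 : m = k <;> simp [hddef, h1, h2, hk]
      rw [Finset.sum_congr rfl (fun m _ => hsplit m), Finset.sum_add_distrib,
        Finset.sum_ite_eq' Finset.univ i (fun _ => t), Finset.sum_ite_eq' Finset.univ k (fun _ => -t)]
      simp
    have hmemy : x + d ∈ Kset n := by
      constructor
      · intro m
        show 0 ≤ x m + d m
        by_cases h1 : m = i
        · subst h1
          have : d m = t := by simp [hddef]
          rw [this]
          linarith [hx0 m]
        · by_cases h2 : m = k
          · subst h2
            have : d m = -t := by simp [hddef, h1]
            rw [this]
            have := min_le_right (x i) (x m)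
            rw [← htdef] at this
            linarith
          · have : d m = 0 := by simp [hddef, h1, h2]
            rw [this, add_zero]
            exact hx0 m
      · have : ∑ m, (x + d) m = ∑ m, x m + ∑ m, d m := by
          simp only [Pi.add_apply]
          rw [Finset.sum_add_distrib]
        rw [this, hd_sum, hsum2]
        norm_num
    have hmemz : x - d ∈ Kset n := by
      constructor
      · intro m
        show 0 ≤ x m - d m
        by_cases h1 : m = i
        · subst h1
          have : d m = t := by simp [hddef]
          rw [this]
          have := min_le_left (x m) (x k)
          rw [← htdef] at this
          linarith
        · by_cases h2 : m = k
          · subst h2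
            have : d m = -t := by simp [hddef, h1]
            rw [this]
            linarith [hx0 m]
          · have : d m = 0 := by simp [hddef, h1, h2]
            rw [this, sub_zero]
            exact hx0 m
      · have : ∑ m, (x - d) m = ∑ m, x m - ∑ m, d m := by
          simp only [Pi.sub_apply]
          rw [Finset.sum_sub_distrib]
        rw [this, hd_sum, hsum2]
        norm_num
    have hseg : x ∈ openSegment ℝ (x + d) (x - d) := by
      refine ⟨1/2, 1/2, by norm_num, by norm_num, by norm_num, ?_⟩
      funext m
      simp only [Pi.add_apply, Pi.sub_apply, Pi.smul_apply, smul_eq_mul]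
      ring
    have heq := (hExt _ hmemy _ hmemz hseg).1
    have : d i = 0 := by
      have := congrFun heq i
      simp only [Pi.add_apply] at this
      linarith
    rw [hddef] at this
    simp at this
    linarith
  have hxi : x i = 2 := by
    rw [← hsum2]
    exact (Finset.sum_eq_single i (fun b _ hb => huniq b hb)
      (fun h => absurd (Finset.mem_univ i) h)).symm
  refine ⟨i, ?_⟩
  ext k
  rcases eq_or_ne k i with rfl | hkne
  · rw [Finsupp.single_eq_same]
    have : (α k : ℝ) = 2 := hxi
    exact_mod_cast this
  · have h0 : (α k : ℝ) = 0 := huniq k hkne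
    have : α k = 0 := by exact_mod_cast h0
    rw [this, Finsupp.single_apply, if_neg (Ne.symm hkne)]


/-- If the Newton diagram of `f` is the standard simplex `{α ≥ 0 : Σ αᵢ = 2}` and the quadratic
part `f_Γ` is positive definite, then every integer point of `conv Δ(f_Γ)` belongs to
`bconv Δ_E(f_Γ)`, and `f` has a regular Newton polyhedron. -/
theorem regular_of_posdef_quadratic {n : ℕ} (f : MvPolynomial (Fin n) ℝ)
    (hf0 : MvPolynomial.eval (0 : Fin n → ℝ) f = 0)
    (hΓ : NewtonDiagram f = {x : Fin n → ℝ | (∀ i, 0 ≤ x i) ∧ ∑ i, x i = 2})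
    (hpd : ∀ x : Fin n → ℝ, x ≠ 0 →
      0 < MvPolynomial.eval x (facePart f (NewtonDiagram f))) :
    (∀ α : Fin n →₀ ℕ,
      expPt α ∈ convexHull ℝ (DeltaSet (facePart f (NewtonDiagram f))) →
      MemBconv (DeltaESet (facePart f (NewtonDiagram f))) α) ∧
    RegularNewtonPolyhedron f := by
  have hΓ' : NewtonDiagram f = simplex2 n := hΓ
  rcases Nat.eq_zero_or_pos n with hn0 | hn
  · subst hn0
    constructor
    · intro α hα
      rw [hΓ'] at hα
      have h2 := deg_ge_two_of_mem_hull f α hα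
      simp at h2
    · constructor
      · intro α hαx
        exfalso
        have hxΔ : expPt α ∈ DeltaSet f := extremePoints_convexHull_subset hαx
        obtain ⟨β, hβ, -⟩ := hxΔ
        have hβ0 : β = 0 := Subsingleton.elim β 0
        rw [mem_support_iff, hβ0] at hβ
        apply hβ
        have h2 : constantCoeff f = 0 := by rw [← MvPolynomial.eval_zero]; exact hf0
        have h3 : coeff 0 f = constantCoeff f := by
          rw [MvPolynomial.constantCoeff_eq]
        rw [h3, h2]
      · intro γ hmax α _ _ _ _
        exfalso
        obtain ⟨⟨⟨-, A, c, hA, -, -⟩, -⟩, -⟩ := hmax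
        exact hA (funext fun i => i.elim0)
  · have hpd' : ∀ x : Fin n → ℝ, x ≠ 0 → 0 < eval x (facePart f (simplex2 n)) := by
      intro x hxne
      have := hpd x hxne
      rwa [hΓ'] at this
    have hs : ∀ i : Fin n, Finsupp.single i 2 ∈ f.support :=
      fun i => mem_support_iff.2 (ne_of_gt (coeff_single_two_pos f hpd' i))
    constructor
    · intro α hα
      rw [hΓ'] at hα ⊢
      exact part1 f hpd' α hα
    · constructor
      · intro α hαx
        obtain ⟨i, rfl⟩ := extreme_eq_single f hn hΓ' hs α hαx
        constructor
        · intro j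
          rcases eq_or_ne j i with rfl | hj
          · simp [Finsupp.single_eq_same]
          · simp [Finsupp.single_apply, Ne.symm hj]
        · exact coeff_single_two_pos f hpd' i
      · intro γ hmax α _ hhull _ _
        have hγ : γ = simplex2 n := maximal_eq_simplex f hn hΓ' hs hmax
        rw [hγ] at hhull ⊢
        exact part1 f hpd' α hhull

end
end

section
/- Let Δ_E ⊂ Z_{≥0}^n be a union of sets of the form α + R_{≥0}^n with α even. Then Δ_E ∩ Z^n ⊆ bconv Δ_E ⊆ conv(Δ_E) ∩ Z^n, where bconv Δ_E is the bisectional convex hull. -/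
/-- `α` is a binary (dyadic) convex combination with full digits of even points of `E`. -/
def MemBconvNat {n : ℕ} (E : Set (Fin n → ℕ)) (α : Fin n → ℕ) : Prop :=
  ∃ (t N : ℕ) (A : Fin t → Fin n → ℕ) (δ : Fin t → Fin N → Bool),
    0 < t ∧
    (∀ s, A s ∈ E ∧ ∀ i, Even (A s i)) ∧
    (∀ s : Fin t, 0 < ∑ k : Fin N, (if δ s k then ((2 : ℚ) ^ (k.1 + 1))⁻¹ else 0)) ∧
    (∑ s : Fin t, ∑ k : Fin N, (if δ s k then ((2 : ℚ) ^ (k.1 + 1))⁻¹ else 0)) = 1 ∧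
    (∀ k : Fin N, ∃ s, δ s k = true) ∧
    (∀ i, (α i : ℚ) = ∑ s : Fin t,
      (∑ k : Fin N, (if δ s k then ((2 : ℚ) ^ (k.1 + 1))⁻¹ else 0)) * (A s i : ℚ))

/-- If `Δ_E ⊆ ℤ₊ⁿ` is a union of translated positive orthants `α + ℝ₊ⁿ` with `α` even, then
`Δ_E ∩ ℤⁿ ⊆ bconv Δ_E ⊆ conv(Δ_E) ∩ ℤⁿ`. -/
theorem bconv_between (n : ℕ) (ΔE : Set (Fin n → ℕ))
    (hΔE : ∃ S : Set (Fin n → ℕ), (∀ β ∈ S, ∀ i, Even (β i)) ∧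
      ΔE = {γ | ∃ β ∈ S, ∀ i, β i ≤ γ i}) :
    (∀ α ∈ ΔE, MemBconvNat ΔE α) ∧
    (∀ α : Fin n → ℕ, MemBconvNat ΔE α →
      (fun i => (α i : ℝ)) ∈ convexHull ℝ ((fun (β : Fin n → ℕ) (i : Fin n) => (β i : ℝ)) '' ΔE)) := by
  obtain ⟨S, hSeven, hSE⟩ := hΔE
  constructor
  · intro α hα
    rw [hSE] at hα
    obtain ⟨β, hβS, hβle⟩ := hα
    refine ⟨2, 1, ![fun i => α i + α i % 2, fun i => α i - α i % 2],
      fun _ _ => true, by norm_num, ?_, ?_, ?_, ?_, ?_⟩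
    · intro s
      constructor
      · rw [hSE]
        refine ⟨β, hβS, fun i => ?_⟩
        obtain ⟨r, hr⟩ := hSeven β hβS i
        have := hβle i
        fin_cases s <;> simp <;> omega
      · intro i
        fin_cases s <;> simp [Nat.even_iff] <;> omega
    · intro s; simp
    · norm_num [Fin.sum_univ_two]
    · intro k; exact ⟨0, rfl⟩
    · intro i
      have hle : α i % 2 ≤ α i := Nat.mod_le _ _
      simp [Fin.sum_univ_two, Nat.cast_sub hle]
      ring
  · intro α hα
    obtain ⟨t, N, A, δ, ht, hA, hpos, hsum, _, hcomb⟩ := hα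
    set w : Fin t → ℚ := fun s => ∑ k : Fin N, (if δ s k then ((2 : ℚ) ^ (k.1 + 1))⁻¹ else 0)
      with hw
    have key : (fun i => (α i : ℝ)) =
        Finset.univ.centerMass (fun s => ((w s : ℚ) : ℝ)) (fun s i => (A s i : ℝ)) := by
      rw [Finset.centerMass_eq_of_sum_1]
      · funext i
        have h := congrArg (fun q : ℚ => (q : ℝ)) (hcomb i)
        push_cast [apply_ite (fun q : ℚ => (q : ℝ))] at h
        simp only [Finset.sum_apply, hw]
        push_cast [apply_ite (fun q : ℚ => (q : ℝ))]
        exact h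
      · have h := congrArg (fun q : ℚ => (q : ℝ)) hsum
        push_cast [apply_ite (fun q : ℚ => (q : ℝ))] at h
        simp only [hw]
        push_cast [apply_ite (fun q : ℚ => (q : ℝ))]
        simp only [hw] at h
        push_cast [apply_ite (fun q : ℚ => (q : ℝ))] at h
        exact h
    rw [key]
    refine Finset.centerMass_mem_convexHull _ (fun s _ => Rat.cast_nonneg.mpr (hpos s).le)
      (Finset.sum_pos (fun s _ => Rat.cast_pos.mpr (hpos s)) ⟨⟨0, ht⟩, Finset.mem_univ _⟩)
      (fun s _ => ⟨A s, (hA s).1, rfl⟩)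
end

section
/- Let f ∈ R[x_1,...,x_n] have Newton diagram Γ(f) contained in the hyperplane {α : k·α_1 + ... + k·α_{n-1} + α_n = 2k} for some positive integer k, with Γ(f) equal to the full set of nonnegative integer points of this hyperplane intersected with the Newton polyhedron structure. If f_Γ lies in the relative interior of the SOS cone of polynomials supported in (1/2)Γ, then f has a regular Newton polyhedron. -/
open MvPolynomial

noncomputable section
attribute [local instance] Classical.propDecidable

namespace RegAux

variable {n : ℕ}

def Avec (n k : ℕ) : Fin (n + 1) → ℝ := fun i => if i = Fin.last n then 1 else k

def Adot (k : ℕ) (x : Fin (n + 1) → ℝ) : ℝ := ∑ i, Avec n k i * x i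

lemma Avec_pos (k : ℕ) (hk : 0 < k) (i : Fin (n + 1)) : 0 < Avec n k i := by
  unfold Avec; split
  · norm_num
  · exact_mod_cast hk

lemma Adot_eq (k : ℕ) (x : Fin (n + 1) → ℝ) :
    Adot k x = (∑ i : Fin n, (k : ℝ) * x i.castSucc) + x (Fin.last n) := by
  unfold Adot Avec
  rw [Fin.sum_univ_castSucc]
  congr 1
  · exact Finset.sum_congr rfl fun i _ => by rw [if_neg (Fin.castSucc_lt_last i).ne]
  · rw [if_pos rfl, one_mul]

lemma Adot_add (k : ℕ) (x y : Fin (n + 1) → ℝ) : Adot k (x + y) = Adot k x + Adot k y := by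
  unfold Adot
  rw [← Finset.sum_add_distrib]
  exact Finset.sum_congr rfl fun i _ => by simp [mul_add]

lemma Adot_sub (k : ℕ) (x y : Fin (n + 1) → ℝ) : Adot k (x - y) = Adot k x - Adot k y := by
  unfold Adot
  rw [← Finset.sum_sub_distrib]
  exact Finset.sum_congr rfl fun i _ => by simp [mul_sub]

lemma Adot_smul (k : ℕ) (c : ℝ) (x : Fin (n + 1) → ℝ) : Adot k (c • x) = c * Adot k x := by
  unfold Adot
  rw [Finset.mul_sum]
  exact Finset.sum_congr rfl fun i _ => by simp [Pi.smul_apply, smul_eq_mul]; ring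

lemma Adot_mono (k : ℕ) (hk : 0 < k) {x y : Fin (n + 1) → ℝ} (h : ∀ i, x i ≤ y i) :
    Adot k x ≤ Adot k y :=
  Finset.sum_le_sum fun i _ => mul_le_mul_of_nonneg_left (h i) (Avec_pos k hk i).le

lemma Adot_single (k : ℕ) (i : Fin (n + 1)) (c : ℝ) :
    Adot k (fun j => if i = j then c else 0) = Avec n k i * c := by
  unfold Adot
  show (∑ j, Avec n k j * (if i = j then c else 0)) = _
  rw [Finset.sum_eq_single i]
  · rw [if_pos rfl]
  · intro b _ hb; rw [if_neg (Ne.symm hb), mul_zero]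
  · intro h; exact absurd (Finset.mem_univ i) h

lemma Adot_sum (k : ℕ) {ι : Type} (t : Finset ι) (z : ι → Fin (n + 1) → ℝ) :
    Adot k (∑ i ∈ t, z i) = ∑ i ∈ t, Adot k (z i) := by
  unfold Adot
  simp only [Finset.sum_apply, Finset.mul_sum]
  exact Finset.sum_comm

lemma Adot_halfspace_convex (k : ℕ) (c : ℝ) :
    Convex ℝ {x : Fin (n + 1) → ℝ | c ≤ Adot k x} := by
  intro x hx y hy a b ha hb hab
  simp only [Set.mem_setOf_eq] at *
  rw [Adot_add, Adot_smul, Adot_smul]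
  calc c = a * c + b * c := by rw [← add_mul, hab, one_mul]
    _ ≤ a * Adot k x + b * Adot k y :=
      add_le_add (mul_le_mul_of_nonneg_left hx ha) (mul_le_mul_of_nonneg_left hy hb)

lemma orthant_convex : Convex ℝ {x : Fin (n + 1) → ℝ | ∀ i, 0 ≤ x i} := by
  intro x hx y hy a b ha hb _ i
  have h1 := hx i
  have h2 := hy i
  simp only [Pi.add_apply, Pi.smul_apply, smul_eq_mul]
  nlinarith

def Vf (n k : ℕ) (j : Fin (n + 1)) : Fin (n + 1) →₀ ℕ :=
  Finsupp.single j (if j = Fin.last n then 2 * k else 2)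

lemma Vf_apply (k : ℕ) (j i : Fin (n + 1)) :
    Vf n k j i = if j = i then (if j = Fin.last n then 2 * k else 2) else 0 :=
  Finsupp.single_apply

lemma Vf_even (k : ℕ) (j i : Fin (n + 1)) : Even (Vf n k j i) := by
  rw [Vf_apply]
  split
  · split
    · exact ⟨k, by ring⟩
    · exact ⟨1, rfl⟩
  · exact ⟨0, rfl⟩

lemma expPt_Vf (k : ℕ) (j : Fin (n + 1)) :
    expPt (Vf n k j) = fun i => if j = i then (if j = Fin.last n then (2 * k : ℝ) else 2) else 0 := by
  funext i
  show ((Vf n k j i : ℕ) : ℝ) = _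
  rw [Vf_apply]
  split
  · split <;> push_cast <;> ring
  · norm_num

lemma Adot_expPt_Vf (k : ℕ) (hk : 0 < k) (j : Fin (n + 1)) :
    Adot k (expPt (Vf n k j)) = 2 * k := by
  rw [expPt_Vf, Adot_single]
  unfold Avec
  split <;> push_cast <;> ring

lemma mem_convexHull_of_sum {E : Type*} [AddCommGroup E] [Module ℝ E] {S : Set E}
    {ι : Type} (t : Finset ι) (w : ι → ℝ) (z : ι → E) (hw0 : ∀ i ∈ t, 0 ≤ w i)
    (hw1 : ∑ i ∈ t, w i = 1) (hz : ∀ i ∈ t, z i ∈ S) :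
    (∑ i ∈ t, w i • z i) ∈ convexHull ℝ S := by
  rw [← Finset.centerMass_eq_of_sum_1 t z hw1]
  exact t.centerMass_mem_convexHull hw0 (hw1 ▸ one_pos) hz

lemma coeff_facePart {m : ℕ} (f : MvPolynomial (Fin m) ℝ) (γ : Set (Fin m → ℝ))
    (β : Fin m →₀ ℕ) :
    coeff β (facePart f γ) = if expPt β ∈ γ then coeff β f else 0 := by
  unfold facePart
  rw [coeff_sum]
  rw [Finset.sum_congr rfl (fun α _ => coeff_monomial β α (coeff α f))]
  rw [Finset.sum_ite_eq']
  by_cases hs : β ∈ f.support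
  · by_cases hγm : expPt β ∈ γ <;> simp [Finset.mem_filter, hs, hγm]
  · by_cases hγm : expPt β ∈ γ <;>
      simp [Finset.mem_filter, hs, hγm, notMem_support_iff.mp hs]

lemma sos_coeff_nonneg {m : ℕ} {Γ' : Set (Fin m → ℝ)} {V : Fin m →₀ ℕ}
    (huniq : ∀ a b : Fin m →₀ ℕ, (2 : ℝ) • expPt a ∈ Γ' → (2 : ℝ) • expPt b ∈ Γ' →
      a + b = V → a = b)
    {p : MvPolynomial (Fin m) ℝ} (hp : p ∈ sosHalfSupported Γ') : 0 ≤ coeff V p := by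
  obtain ⟨l, hl, rfl⟩ := hp
  induction l using Multiset.induction with
  | empty => simp
  | cons q l ih =>
    rw [Multiset.map_cons, Multiset.sum_cons, coeff_add]
    have h1 : 0 ≤ coeff V (q ^ 2) := by
      rw [pow_two, coeff_mul]
      apply Finset.sum_nonneg
      intro x hx
      by_cases ha : x.1 ∈ q.support
      · by_cases hb : x.2 ∈ q.support
        · have heq : x.1 = x.2 :=
            huniq x.1 x.2 (hl q (Multiset.mem_cons_self q l) _ ha)
              (hl q (Multiset.mem_cons_self q l) _ hb) (Finset.HasAntidiagonal.mem_antidiagonal.mp hx)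
          rw [heq]
          exact mul_self_nonneg _
        · rw [notMem_support_iff.mp hb, mul_zero]
      · rw [notMem_support_iff.mp ha, zero_mul]
    have h2 : 0 ≤ coeff V (Multiset.map (· ^ 2) l).sum :=
      ih fun q' hq' => hl q' (Multiset.mem_cons_of_mem hq')
    linarith

lemma Vf_apply_self (k : ℕ) (j : Fin (n + 1)) :
    Vf n k j j = if j = Fin.last n then 2 * k else 2 := by
  rw [Vf_apply, if_pos rfl]

lemma Vf_apply_ne (k : ℕ) {j i : Fin (n + 1)} (h : j ≠ i) : Vf n k j i = 0 := by
  rw [Vf_apply, if_neg h]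

lemma Vf_last_self (k : ℕ) : Vf n k (Fin.last n) (Fin.last n) = 2 * k := by
  rw [Vf_apply_self, if_pos rfl]

lemma Vf_cs_self (k : ℕ) (i0 : Fin n) : Vf n k i0.castSucc i0.castSucc = 2 := by
  rw [Vf_apply_self, if_neg (Fin.castSucc_lt_last i0).ne]

lemma sum_ite_last (a : ℝ) (v : Fin (n + 1) → ℝ) :
    (∑ j, if j = Fin.last n then a else v j) = (∑ i : Fin n, v i.castSucc) + a := by
  rw [Fin.sum_univ_castSucc, if_pos rfl]
  congr 1
  exact Finset.sum_congr rfl fun i _ => if_neg (Fin.castSucc_lt_last i).ne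

lemma vertex_uniq (k : ℕ) (hk : 0 < k) (j : Fin (n + 1))
    (Γs : Set (Fin (n + 1) → ℝ)) (hΓs : Γs = {x | (∀ i, 0 ≤ x i) ∧ Adot k x = 2 * k}) :
    ∀ a b : Fin (n + 1) →₀ ℕ, (2 : ℝ) • expPt a ∈ Γs → (2 : ℝ) • expPt b ∈ Γs →
      a + b = Vf n k j → a = b := by
  subst hΓs
  intro a b ha hb hab
  have hva : Adot k (expPt a) = k := by
    have h := ha.2
    rw [Adot_smul] at h
    linarith
  have hvb : Adot k (expPt b) = k := by
    have h := hb.2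
    rw [Adot_smul] at h
    linarith
  have hzero : ∀ i, i ≠ j → a i = 0 ∧ b i = 0 := by
    intro i hi
    have h := DFunLike.congr_fun hab i
    rw [Finsupp.add_apply, Vf_apply, if_neg (fun hh => hi hh.symm)] at h
    omega
  have key : ∀ c : Fin (n + 1) →₀ ℕ, (∀ i, i ≠ j → c i = 0) →
      Adot k (expPt c) = Avec n k j * (c j : ℝ) := by
    intro c hc
    have hcfun : expPt c = fun i => if j = i then (c j : ℝ) else 0 := by
      funext i
      by_cases h : j = i
      · subst h; rw [if_pos rfl]; rfl
      · rw [if_neg h]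
        show ((c i : ℕ) : ℝ) = 0
        rw [hc i (fun hh => h hh.symm)]
        norm_num
    rw [hcfun, Adot_single]
  have hAa := key a fun i hi => (hzero i hi).1
  have hAb := key b fun i hi => (hzero i hi).2
  have hjj : (a j : ℝ) = (b j : ℝ) := by
    have hA := (Avec_pos k hk j).ne'
    apply mul_left_cancel₀ hA
    rw [← hAa, ← hAb, hva, hvb]
  ext i
  by_cases h : i = j
  · subst h; exact_mod_cast hjj
  · rw [(hzero i h).1, (hzero i h).2]

end RegAux

set_option maxHeartbeats 1600000 in
/-- If the Newton diagram of `f ∈ ℝ[x₁,…,x_{n+1}]` is the full set of nonnegative points of the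
hyperplane `k x₁ + ⋯ + k x_n + x_{n+1} = 2k` for some `k ≥ 1`, and `f_Γ` lies in the relative
interior of the SOS cone supported in `(1/2)Γ`, then `f` has a regular Newton polyhedron. -/
theorem regular_of_slanted_plane_diagram {n : ℕ} (f : MvPolynomial (Fin (n + 1)) ℝ)
    (hf0 : MvPolynomial.eval (0 : Fin (n + 1) → ℝ) f = 0)
    (k : ℕ) (hk : 0 < k)
    (hΓ : NewtonDiagram f = {x : Fin (n + 1) → ℝ | (∀ i, 0 ≤ x i) ∧
      (∑ i : Fin n, (k : ℝ) * x i.castSucc) + x (Fin.last n) = 2 * k})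
    (hrint : MemRint (sosHalfSupported (NewtonDiagram f)) (facePart f (NewtonDiagram f))) :
    RegularNewtonPolyhedron f := by
  classical
  obtain ⟨hgC, hrint2⟩ := hrint
  set Γs : Set (Fin (n + 1) → ℝ) := {x | (∀ i, 0 ≤ x i) ∧ RegAux.Adot k x = 2 * k} with hΓsdef
  have hΓ' : NewtonDiagram f = Γs := by
    rw [hΓ, hΓsdef]
    ext x
    simp only [Set.mem_setOf_eq, RegAux.Adot_eq]
  set g : MvPolynomial (Fin (n + 1)) ℝ := facePart f (NewtonDiagram f) with hgdef
  -- Step A : positive coefficients at the vertices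
  have hvertg : ∀ j, 0 < coeff (RegAux.Vf n k j) g := by
    intro j
    set β : Fin (n + 1) →₀ ℕ := Finsupp.single j (if j = Fin.last n then k else 1) with hβdef
    have hβfun : expPt β = fun i => if j = i then ((if j = Fin.last n then k else 1 : ℕ) : ℝ) else 0 := by
      funext i
      show ((β i : ℕ) : ℝ) = _
      rw [hβdef, Finsupp.single_apply]
      split <;> norm_num
    have h2β : (2 : ℝ) • expPt β ∈ NewtonDiagram f := by
      rw [hΓ']
      refine ⟨fun i => ?_, ?_⟩
      · have : (0:ℝ) ≤ expPt β i := Nat.cast_nonneg _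
        simp only [Pi.smul_apply, smul_eq_mul]
        linarith
      · rw [RegAux.Adot_smul, hβfun, RegAux.Adot_single]
        unfold RegAux.Avec
        split <;> push_cast <;> ring
    have hy : (monomial β (1 : ℝ)) ^ 2 ∈ sosHalfSupported (NewtonDiagram f) := by
      refine ⟨{monomial β 1}, ?_, by simp⟩
      intro q hq α hα
      rw [Multiset.mem_singleton] at hq
      subst hq
      rw [support_monomial, if_neg one_ne_zero, Finset.mem_singleton] at hα
      subst hα
      exact h2β
    obtain ⟨μ, hμ, hmem⟩ := hrint2 _ hy
    have huniq := RegAux.vertex_uniq k hk j (NewtonDiagram f) (hΓ'.trans hΓsdef)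
    have h0 : 0 ≤ coeff (RegAux.Vf n k j) (μ • g + (1 - μ) • (monomial β (1 : ℝ)) ^ 2) :=
      RegAux.sos_coeff_nonneg huniq hmem
    have hββ : β + β = RegAux.Vf n k j := by
      rw [hβdef, ← Finsupp.single_add]
      unfold RegAux.Vf
      congr 1
      split <;> omega
    have hyc : coeff (RegAux.Vf n k j) ((monomial β (1 : ℝ)) ^ 2) = 1 := by
      rw [pow_two, monomial_mul, coeff_monomial, if_pos hββ, mul_one]
    rw [coeff_add, coeff_smul, coeff_smul, hyc, smul_eq_mul, smul_eq_mul, mul_one] at h0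
    by_contra hc
    push_neg at hc
    have hμ0 : (0:ℝ) < μ := lt_trans one_pos hμ
    have : μ * coeff (RegAux.Vf n k j) g ≤ 0 := mul_nonpos_of_nonneg_of_nonpos hμ0.le hc
    linarith
  have hVcoeff : ∀ j, 0 < coeff (RegAux.Vf n k j) f := by
    intro j
    have h := hvertg j
    rw [hgdef, RegAux.coeff_facePart] at h
    by_cases hm : expPt (RegAux.Vf n k j) ∈ NewtonDiagram f
    · rwa [if_pos hm] at h
    · rw [if_neg hm] at h; linarith
  have hVsupp : ∀ j, RegAux.Vf n k j ∈ f.support := fun j => mem_support_iff.mpr (hVcoeff j).ne'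
  set P : Set (Fin (n + 1) → ℝ) := NewtonPolyhedron f with hPdef
  have hdiagP : NewtonDiagram f ⊆ P := by
    intro x hx
    have hx' : x ∈ ⋃ F ∈ {F | IsCompactFaceOf (NewtonPolyhedron f) F}, F := hx
    obtain ⟨F, hF, hxF⟩ := Set.mem_iUnion₂.mp hx'
    obtain ⟨-, A, c, -, -, hFeq⟩ := hF.1
    rw [hFeq] at hxF
    exact hxF.1
  have hΓsP : Γs ⊆ P := hΓ' ▸ hdiagP
  -- Q ⊆ P
  have hQaux : ∀ (w : Fin (n + 1) → ℝ) (x : Fin (n + 1) → ℝ), (∀ j, 0 ≤ w j) →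
      (∑ j, w j = 1) → (∀ i, (∑ j, w j * (RegAux.Vf n k j i : ℝ)) ≤ x i) → x ∈ P := by
    intro w x hw0 hw1 hy
    set y : Fin (n + 1) → ℝ := fun i => ∑ j, w j * (RegAux.Vf n k j i : ℝ) with hydef
    have hx : x = ∑ j, w j • (expPt (RegAux.Vf n k j) + (x - y)) := by
      funext i
      simp only [Finset.sum_apply, Pi.smul_apply, Pi.add_apply, Pi.sub_apply, smul_eq_mul, expPt]
      have hexp : ∑ j, w j * ((RegAux.Vf n k j i : ℝ) + (x i - y i))
          = (∑ j, w j * (RegAux.Vf n k j i : ℝ)) + (∑ j, w j) * (x i - y i) := by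
        simp only [mul_add]
        rw [Finset.sum_add_distrib, ← Finset.sum_mul]
      rw [hexp, hw1, one_mul, hydef]
      ring
    rw [hx]
    show (∑ j, w j • (expPt (RegAux.Vf n k j) + (x - y))) ∈ convexHull ℝ (DeltaSet f)
    apply RegAux.mem_convexHull_of_sum Finset.univ w _ (fun j _ => hw0 j) hw1
    intro j _
    refine ⟨RegAux.Vf n k j, hVsupp j, fun i => ?_⟩
    simp only [Pi.add_apply, Pi.sub_apply, expPt]
    have h2 : y i ≤ x i := hy i
    linarith
  have hQsubP : ∀ x : Fin (n + 1) → ℝ, (∀ i, 0 ≤ x i) → 2 * (k : ℝ) ≤ RegAux.Adot k x → x ∈ P := by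
    intro x hx0 hxv
    set s : ℝ := ∑ i : Fin n, x i.castSucc with hsdef
    have hs0 : 0 ≤ s := Finset.sum_nonneg fun i _ => hx0 _
    have hAx : RegAux.Adot k x = k * s + x (Fin.last n) := by
      rw [RegAux.Adot_eq, hsdef, Finset.mul_sum]
    have hvsum : ∀ (w : Fin (n + 1) → ℝ) (i : Fin (n + 1)),
        (∑ j, w j * (RegAux.Vf n k j i : ℝ)) = w i * (if i = Fin.last n then (2 * k : ℝ) else 2) := by
      intro w i
      rw [Finset.sum_eq_single i]
      · congr 1
        rw [RegAux.Vf_apply, if_pos rfl]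
        split_ifs <;> push_cast <;> ring
      · intro j _ hj
        rw [RegAux.Vf_apply, if_neg hj]
        norm_num
      · intro h; exact absurd (Finset.mem_univ i) h
    by_cases hcase : 2 ≤ s
    · have hspos : (0:ℝ) < s := by linarith
      set w : Fin (n + 1) → ℝ := fun j => if j = Fin.last n then 0 else x j / s with hwdef
      apply hQaux w x
      · intro j
        rw [hwdef]
        dsimp only
        split_ifs
        · exact le_refl 0
        · exact div_nonneg (hx0 j) hs0
      · simp only [hwdef]
        rw [RegAux.sum_ite_last, add_zero, ← Finset.sum_div, ← hsdef, div_self hspos.ne']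
      · intro i
        rw [hvsum]
        by_cases hi : i = Fin.last n
        · rw [if_pos hi, hwdef]
          dsimp only
          rw [if_pos hi, zero_mul]
          exact hx0 i
        · rw [if_neg hi, hwdef]
          dsimp only
          rw [if_neg hi, div_mul_eq_mul_div, div_le_iff₀ hspos]
          nlinarith [hx0 i]
    · push_neg at hcase
      set w : Fin (n + 1) → ℝ := fun j => if j = Fin.last n then 1 - s / 2 else x j / 2 with hwdef
      apply hQaux w x
      · intro j
        rw [hwdef]
        dsimp only
        split_ifs
        · linarith
        · exact div_nonneg (hx0 j) (by norm_num)
      · simp only [hwdef]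
        rw [RegAux.sum_ite_last, ← Finset.sum_div, ← hsdef]
        ring
      · intro i
        rw [hvsum]
        by_cases hi : i = Fin.last n
        · rw [if_pos hi, hwdef]
          dsimp only
          rw [if_pos hi]
          have hx' : 2 * (k : ℝ) ≤ k * s + x (Fin.last n) := by rw [← hAx]; exact hxv
          have : x (Fin.last n) = x i := by rw [hi]
          nlinarith
        · rw [if_neg hi, hwdef]
          dsimp only
          rw [if_neg hi]
          have : x i / 2 * 2 = x i := by ring
          rw [this]
  -- f ≠ 0
  have hfne : f ≠ 0 := by
    intro h0
    have hx0 : expPt (RegAux.Vf n k (Fin.last n)) ∈ NewtonDiagram f := by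
      rw [hΓ']
      exact ⟨fun i => Nat.cast_nonneg _, RegAux.Adot_expPt_Vf k hk _⟩
    have hxP := hdiagP hx0
    have hD : DeltaSet f = ∅ := by
      ext x
      simp [DeltaSet, h0, support_zero]
    rw [hPdef] at hxP
    unfold NewtonPolyhedron at hxP
    rw [hD, convexHull_empty] at hxP
    exact hxP
  obtain ⟨β₀, hβ₀s, hβ₀min⟩ :=
    f.support.exists_min_image (fun β => RegAux.Adot k (expPt β)) (support_nonempty.mpr hfne)
  set c0 : ℝ := RegAux.Adot k (expPt β₀) with hc0def
  have hDlb : DeltaSet f ⊆ {x : Fin (n + 1) → ℝ | (∀ i, 0 ≤ x i) ∧ c0 ≤ RegAux.Adot k x} := by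
    rintro x ⟨β, hβ, hle⟩
    refine ⟨fun i => le_trans (Nat.cast_nonneg _) (hle i), ?_⟩
    exact le_trans (hβ₀min β hβ) (RegAux.Adot_mono k hk hle)
  have hKconv : Convex ℝ {x : Fin (n + 1) → ℝ | (∀ i, 0 ≤ x i) ∧ c0 ≤ RegAux.Adot k x} :=
    RegAux.orthant_convex.inter (RegAux.Adot_halfspace_convex k c0)
  have hPlb : ∀ x ∈ P, (∀ i, 0 ≤ x i) ∧ c0 ≤ RegAux.Adot k x := fun x hx =>
    convexHull_min hDlb hKconv hx
  set S0 : Set (Fin (n + 1) → ℝ) :=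
    expPt '' {β : Fin (n + 1) →₀ ℕ | β ∈ f.support ∧ RegAux.Adot k (expPt β) = c0} with hS0def
  have hS0fin : S0.Finite :=
    Set.Finite.image _ (f.support.finite_toSet.subset fun β hβ => hβ.1)
  have hFsub : {x | x ∈ P ∧ RegAux.Adot k x = c0} ⊆ convexHull ℝ S0 := by
    rintro x ⟨hxP, hxv⟩
    have hxP' : x ∈ convexHull ℝ (DeltaSet f) := hxP
    rw [convexHull_eq] at hxP'
    obtain ⟨ι, t, w, z, hw0, hw1, hz, hcm⟩ := hxP'
    rw [Finset.centerMass_eq_of_sum_1 _ _ hw1] at hcm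
    have hzlb : ∀ i ∈ t, c0 ≤ RegAux.Adot k (z i) := fun i hi => (hDlb (hz i hi)).2
    have hsum0 : ∑ i ∈ t, w i * (RegAux.Adot k (z i) - c0) = 0 := by
      have h1 : RegAux.Adot k x = ∑ i ∈ t, w i * RegAux.Adot k (z i) := by
        rw [← hcm, RegAux.Adot_sum]
        exact Finset.sum_congr rfl fun i _ => RegAux.Adot_smul k (w i) (z i)
      have h2 : ∑ i ∈ t, w i * c0 = c0 := by rw [← Finset.sum_mul, hw1, one_mul]
      calc ∑ i ∈ t, w i * (RegAux.Adot k (z i) - c0)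
          = (∑ i ∈ t, w i * RegAux.Adot k (z i)) - ∑ i ∈ t, w i * c0 := by
            rw [← Finset.sum_sub_distrib]
            exact Finset.sum_congr rfl fun i _ => by ring
        _ = 0 := by rw [← h1, h2, hxv, sub_self]
    have hterm : ∀ i ∈ t, w i * (RegAux.Adot k (z i) - c0) = 0 :=
      (Finset.sum_eq_zero_iff_of_nonneg fun i hi =>
        mul_nonneg (hw0 i hi) (by linarith [hzlb i hi])).mp hsum0
    set z' : ι → Fin (n + 1) → ℝ := fun i => if w i = 0 then expPt β₀ else z i with hz'def
    have hxz' : x = ∑ i ∈ t, w i • z' i := by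
      rw [← hcm]
      refine Finset.sum_congr rfl fun i hi => ?_
      rw [hz'def]
      dsimp only
      by_cases h : w i = 0
      · rw [if_pos h, h, zero_smul, zero_smul]
      · rw [if_neg h]
    have hz'S0 : ∀ i ∈ t, z' i ∈ S0 := by
      intro i hi
      rw [hz'def]
      dsimp only
      by_cases h : w i = 0
      · rw [if_pos h]
        exact ⟨β₀, ⟨hβ₀s, rfl⟩, rfl⟩
      · rw [if_neg h]
        have hv : RegAux.Adot k (z i) = c0 := by
          rcases mul_eq_zero.mp (hterm i hi) with h' | h'
          · exact absurd h' h
          · linarith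
        obtain ⟨β, hβ, hle⟩ := hz i hi
        have hββ : RegAux.Adot k (expPt β) = c0 := by
          have hle' : RegAux.Adot k (expPt β) ≤ c0 := by
            rw [← hv]
            exact RegAux.Adot_mono k hk hle
          exact le_antisymm hle' (hβ₀min β hβ)
        have hzi : z i = expPt β := by
          by_contra hne
          have hstrict : ∃ i0, expPt β i0 < z i i0 := by
            by_contra hall
            push_neg at hall
            exact hne (funext fun i0 => le_antisymm (hall i0) (hle i0))
          obtain ⟨i0, hi0⟩ := hstrict
          have hlt : RegAux.Adot k (expPt β) < RegAux.Adot k (z i) := by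
            unfold RegAux.Adot
            apply Finset.sum_lt_sum
            · exact fun i1 _ => mul_le_mul_of_nonneg_left (hle i1) (RegAux.Avec_pos k hk i1).le
            · exact ⟨i0, Finset.mem_univ i0, mul_lt_mul_of_pos_left hi0 (RegAux.Avec_pos k hk i0)⟩
          rw [hββ, hv] at hlt
          exact lt_irrefl _ hlt
        exact ⟨β, ⟨hβ, hββ⟩, hzi.symm⟩
    rw [hxz']
    exact RegAux.mem_convexHull_of_sum t w z' hw0 hw1 hz'S0
  have hFsup : convexHull ℝ S0 ⊆ {x | x ∈ P ∧ RegAux.Adot k x = c0} := by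
    apply convexHull_min
    · rintro x ⟨β, ⟨hβ, hv⟩, rfl⟩
      exact ⟨subset_convexHull ℝ _ ⟨β, hβ, fun i => le_refl _⟩, hv⟩
    · intro x hx y hy a b ha hb hab
      refine ⟨(convex_convexHull ℝ (DeltaSet f)) hx.1 hy.1 ha hb hab, ?_⟩
      rw [RegAux.Adot_add, RegAux.Adot_smul, RegAux.Adot_smul, hx.2, hy.2, ← add_mul, hab, one_mul]
  have hFeq : {x | x ∈ P ∧ RegAux.Adot k x = c0} = convexHull ℝ S0 :=
    Set.Subset.antisymm hFsub hFsup
  have hβ₀P : expPt β₀ ∈ P := subset_convexHull ℝ _ ⟨β₀, hβ₀s, fun i => le_refl _⟩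
  have hFface : IsCompactFaceOf (NewtonPolyhedron f) {x | x ∈ P ∧ RegAux.Adot k x = c0} := by
    constructor
    · refine ⟨⟨expPt β₀, hβ₀P, rfl⟩, RegAux.Avec n k, c0, ?_, ?_, ?_⟩
      · intro h0
        have h1 := congr_fun h0 (Fin.last n)
        unfold RegAux.Avec at h1
        rw [if_pos rfl] at h1
        norm_num at h1
      · intro x hx
        exact (hPlb x hx).2
      · rfl
    · rw [hFeq]
      exact hS0fin.isCompact_convexHull ℝ
  have hFdiag : {x | x ∈ P ∧ RegAux.Adot k x = c0} ⊆ NewtonDiagram f := by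
    intro x hx
    show x ∈ ⋃ F ∈ {F | IsCompactFaceOf (NewtonPolyhedron f) F}, F
    exact Set.mem_iUnion₂.mpr ⟨_, hFface, hx⟩
  have hc0 : c0 = 2 * k := by
    have h1 : expPt β₀ ∈ NewtonDiagram f := hFdiag ⟨hβ₀P, rfl⟩
    rw [hΓ'] at h1
    rw [hc0def]
    exact h1.2
  have hsupplb : ∀ β ∈ f.support, 2 * (k : ℝ) ≤ RegAux.Adot k (expPt β) := fun β hβ =>
    hc0 ▸ hβ₀min β hβ
  have hΓsface : IsCompactFaceOf (NewtonPolyhedron f) Γs := by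
    have hset : {x | x ∈ P ∧ RegAux.Adot k x = c0} = Γs := by
      apply Set.Subset.antisymm
      · intro x hx
        rw [← hΓ']
        exact hFdiag hx
      · intro x hx
        exact ⟨hΓsP hx, by rw [hc0]; exact hx.2⟩
    rw [← hset]
    exact hFface
  have hmaxΓ : ∀ γ, IsMaximalFace f γ → γ = Γs := by
    intro γ hγ
    have hsub : γ ⊆ Γs := by
      rw [← hΓ']
      intro x hx
      show x ∈ ⋃ F ∈ {F | IsCompactFaceOf (NewtonPolyhedron f) F}, F
      exact Set.mem_iUnion₂.mpr ⟨γ, hγ.1, hx⟩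
    exact (hγ.2 Γs hΓsface hsub).symm
  constructor
  -- Conjunct 1
  · intro α hα
    have hwig : ∀ d : Fin (n + 1) → ℝ, d ≠ 0 → expPt α + d ∈ P → expPt α - d ∈ P → False := by
      intro d hd h1 h2
      have hseg : expPt α ∈ openSegment ℝ (expPt α - d) (expPt α + d) := by
        refine ⟨1/2, 1/2, by norm_num, by norm_num, by norm_num, ?_⟩
        funext i
        simp only [Pi.add_apply, Pi.sub_apply, Pi.smul_apply, smul_eq_mul]
        ring
      have heq := hα.2 h2 h1 hseg
      apply hd
      funext i
      have h3 := congr_fun heq i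
      simp only [Pi.sub_apply] at h3
      have : d i = 0 := by linarith
      simpa using this
    have hαD : expPt α ∈ DeltaSet f := extremePoints_convexHull_subset hα
    obtain ⟨β, hβ, hβle⟩ := hαD
    have hαnn : ∀ i, (0 : ℝ) ≤ expPt α i := fun i => Nat.cast_nonneg _
    have hαβ : α = β := by
      by_contra hne
      have hstrict : ∃ i0, (β i0 : ℝ) < (α i0 : ℝ) := by
        by_contra hall
        push_neg at hall
        apply hne
        ext i
        exact_mod_cast le_antisymm (hall i) (hβle i)
      obtain ⟨i0, hi0⟩ := hstrict
      set d : Fin (n + 1) → ℝ := fun j => if i0 = j then (α i0 : ℝ) - β i0 else 0 with hddef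
      apply hwig d
      · intro h0
        have h1 : d i0 = (α i0 : ℝ) - (β i0 : ℝ) := by
          show (if i0 = i0 then (α i0 : ℝ) - (β i0 : ℝ) else 0) = _
          rw [if_pos rfl]
        rw [h0] at h1
        simp only [Pi.zero_apply] at h1
        linarith
      · apply subset_convexHull ℝ (DeltaSet f)
        refine ⟨β, hβ, fun i => ?_⟩
        simp only [Pi.add_apply, hddef]
        split_ifs with h
        · rw [← h]
          have := hβle i0
          linarith
        · have := hβle i
          simpa using this
      · apply subset_convexHull ℝ (DeltaSet f)
        refine ⟨β, hβ, fun i => ?_⟩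
        simp only [Pi.sub_apply, hddef]
        split_ifs with h
        · rw [← h]
          show (β i0 : ℝ) ≤ (α i0 : ℝ) - ((α i0 : ℝ) - β i0)
          linarith
        · have := hβle i
          simpa using this
    have hαs : α ∈ f.support := by rw [hαβ]; exact hβ
    have hge : 2 * (k : ℝ) ≤ RegAux.Adot k (expPt α) := hsupplb α hαs
    have hk' : (0:ℝ) < k := by exact_mod_cast hk
    have hvposc : ∃ i, 0 < expPt α i := by
      by_contra hall
      push_neg at hall
      have hzero : ∀ i, expPt α i = 0 := fun i => le_antisymm (hall i) (hαnn i)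
      have h0 : RegAux.Adot k (expPt α) = 0 := by
        unfold RegAux.Adot
        exact Finset.sum_eq_zero fun i _ => by rw [hzero i, mul_zero]
      rw [h0] at hge
      linarith
    have hv : RegAux.Adot k (expPt α) = 2 * k := by
      by_contra hne
      have hgt : 2 * (k : ℝ) < RegAux.Adot k (expPt α) := lt_of_le_of_ne hge (Ne.symm hne)
      obtain ⟨i, hipos⟩ := hvposc
      have hApos := RegAux.Avec_pos k hk i
      set ε : ℝ := min (expPt α i) ((RegAux.Adot k (expPt α) - 2 * k) / RegAux.Avec n k i)
        with hεdef
      have hεpos : 0 < ε := lt_min hipos (div_pos (by linarith) hApos)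
      set d : Fin (n + 1) → ℝ := fun j => if i = j then ε else 0 with hddef
      have hdv : RegAux.Adot k d = RegAux.Avec n k i * ε := RegAux.Adot_single k i ε
      apply hwig d
      · intro h0
        have h1 : d i = ε := by
          show (if i = i then ε else 0) = ε
          rw [if_pos rfl]
        rw [h0] at h1
        simp only [Pi.zero_apply] at h1
        linarith
      · apply hQsubP
        · intro j
          simp only [Pi.add_apply, hddef]
          split_ifs
          · linarith [hαnn j]
          · simpa using hαnn j
        · rw [RegAux.Adot_add, hdv]
          nlinarith [mul_pos hApos hεpos]
      · apply hQsubP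
        · intro j
          simp only [Pi.sub_apply, hddef]
          split_ifs with h
          · rw [← h]
            have h1 : ε ≤ expPt α i := min_le_left _ _
            linarith
          · simpa using hαnn j
        · rw [RegAux.Adot_sub, hdv]
          have h1 : ε ≤ (RegAux.Adot k (expPt α) - 2 * k) / RegAux.Avec n k i := min_le_right _ _
          have h2 : ε * RegAux.Avec n k i ≤ RegAux.Adot k (expPt α) - 2 * k :=
            (le_div_iff₀ hApos).mp h1
          nlinarith
    have hsingle : ∀ i₁ i₂ : Fin (n + 1), i₁ ≠ i₂ → 0 < expPt α i₁ → 0 < expPt α i₂ → False := by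
      intro i₁ i₂ hne12 h1 h2
      have hA1 : 0 < RegAux.Avec n k i₁ := RegAux.Avec_pos k hk i₁
      have hA2 : 0 < RegAux.Avec n k i₂ := RegAux.Avec_pos k hk i₂
      set ε : ℝ := min (expPt α i₁ / RegAux.Avec n k i₂) (expPt α i₂ / RegAux.Avec n k i₁)
        with hεdef
      have hεpos : 0 < ε := lt_min (div_pos h1 hA2) (div_pos h2 hA1)
      set d : Fin (n + 1) → ℝ := (fun j => if i₁ = j then ε * RegAux.Avec n k i₂ else 0) -
        (fun j => if i₂ = j then ε * RegAux.Avec n k i₁ else 0) with hddef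
      have hdapp : ∀ j, d j = (if i₁ = j then ε * RegAux.Avec n k i₂ else 0) -
          (if i₂ = j then ε * RegAux.Avec n k i₁ else 0) := fun j => rfl
      have hdv : RegAux.Adot k d = 0 := by
        rw [hddef, RegAux.Adot_sub, RegAux.Adot_single, RegAux.Adot_single]
        ring
      have hε1 : ε * RegAux.Avec n k i₂ ≤ expPt α i₁ := by
        have := min_le_left (expPt α i₁ / RegAux.Avec n k i₂) (expPt α i₂ / RegAux.Avec n k i₁)
        rw [← hεdef] at this
        exact (le_div_iff₀ hA2).mp this
      have hε2 : ε * RegAux.Avec n k i₁ ≤ expPt α i₂ := by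
        have := min_le_right (expPt α i₁ / RegAux.Avec n k i₂) (expPt α i₂ / RegAux.Avec n k i₁)
        rw [← hεdef] at this
        exact (le_div_iff₀ hA1).mp this
      apply hwig d
      · intro h0
        have h3 : d i₁ = 0 := by rw [h0]; rfl
        rw [hdapp i₁, if_pos rfl, if_neg (fun hh => hne12 hh.symm), sub_zero] at h3
        nlinarith [mul_pos hεpos hA2]
      · apply hΓsP
        refine ⟨fun j => ?_, ?_⟩
        · rw [Pi.add_apply, hdapp j]
          by_cases hj1 : i₁ = j
          · rw [if_pos hj1, if_neg (fun hh => hne12 (hh.trans hj1.symm).symm)]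
            rw [← hj1]
            nlinarith
          · rw [if_neg hj1]
            by_cases hj2 : i₂ = j
            · rw [if_pos hj2, ← hj2]
              linarith
            · rw [if_neg hj2]
              simpa using hαnn j
        · rw [RegAux.Adot_add, hdv, add_zero]
          exact hv
      · apply hΓsP
        refine ⟨fun j => ?_, ?_⟩
        · rw [Pi.sub_apply, hdapp j]
          by_cases hj1 : i₁ = j
          · rw [if_pos hj1, if_neg (fun hh => hne12 (hh.trans hj1.symm).symm)]
            rw [← hj1]
            linarith
          · rw [if_neg hj1]
            by_cases hj2 : i₂ = j
            · rw [if_pos hj2, ← hj2]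
              nlinarith
            · rw [if_neg hj2]
              simpa using hαnn j
        · rw [RegAux.Adot_sub, hdv, sub_zero]
          exact hv
    obtain ⟨i, hi⟩ := hvposc
    have hrest : ∀ j, j ≠ i → α j = 0 := by
      intro j hj
      by_contra hcj
      have hpj : (0:ℝ) < expPt α j := by
        show (0:ℝ) < ((α j : ℕ) : ℝ)
        exact_mod_cast Nat.pos_of_ne_zero hcj
      exact hsingle j i hj hpj hi
    have hAα : RegAux.Adot k (expPt α) = RegAux.Avec n k i * (α i : ℝ) := by
      have hfun : expPt α = fun j => if i = j then (α i : ℝ) else 0 := by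
        funext j
        by_cases h : i = j
        · rw [if_pos h, ← h]
          rfl
        · rw [if_neg h]
          show ((α j : ℕ) : ℝ) = 0
          rw [hrest j (fun hh => h hh.symm)]
          norm_num
      rw [hfun, RegAux.Adot_single]
    have hαV : α = RegAux.Vf n k i := by
      have hvali : RegAux.Avec n k i * (α i : ℝ) = 2 * k := by rw [← hAα, hv]
      ext j
      rw [RegAux.Vf_apply]
      by_cases h : i = j
      · rw [if_pos h, ← h]
        unfold RegAux.Avec at hvali
        by_cases hl : i = Fin.last n
        · rw [if_pos hl] at hvali
          rw [if_pos hl]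
          rw [one_mul] at hvali
          exact_mod_cast hvali
        · rw [if_neg hl] at hvali
          rw [if_neg hl]
          have hkne : (k:ℝ) ≠ 0 := by positivity
          have h2 : (α i : ℝ) = 2 := mul_left_cancel₀ hkne (by rw [hvali]; ring)
          exact_mod_cast h2
      · rw [if_neg h]
        exact hrest j (fun hh => h hh.symm)
    refine ⟨fun i0 => ?_, ?_⟩
    · rw [hαV]
      exact RegAux.Vf_even k i i0
    · rw [hαV]
      exact hVcoeff i
  -- Conjunct 2
  · intro γ hγmax α hαs hαconv hαnot _hbad
    have hγ : γ = Γs := hmaxΓ γ hγmax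
    rw [hγ] at hαconv hαnot ⊢
    have hgΓ : facePart f Γs = g := by rw [hgdef, hΓ']
    rw [hgΓ] at hαconv ⊢
    have hgsupp : ∀ β ∈ g.support, RegAux.Adot k (expPt β) = 2 * k := by
      intro β hβ
      have hcβ := mem_support_iff.mp hβ
      rw [hgdef, RegAux.coeff_facePart] at hcβ
      by_cases h : expPt β ∈ NewtonDiagram f
      · rw [hΓ'] at h
        exact h.2
      · rw [if_neg h] at hcβ
        exact absurd rfl hcβ
    have hDg : DeltaSet g ⊆ {x : Fin (n + 1) → ℝ | 2 * (k : ℝ) ≤ RegAux.Adot k x} := by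
      rintro x ⟨β, hβ, hle⟩
      show 2 * (k : ℝ) ≤ RegAux.Adot k x
      calc 2 * (k : ℝ) = RegAux.Adot k (expPt β) := (hgsupp β hβ).symm
        _ ≤ RegAux.Adot k x := RegAux.Adot_mono k hk hle
    have hge : 2 * (k : ℝ) ≤ RegAux.Adot k (expPt α) :=
      convexHull_min hDg (RegAux.Adot_halfspace_convex k _) hαconv
    have hgt : 2 * (k : ℝ) < RegAux.Adot k (expPt α) := by
      rcases lt_or_eq_of_le hge with h | h
      · exact h
      · exact absurd ⟨fun i => Nat.cast_nonneg _, h.symm⟩ hαnot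
    have hnv : 2 * k + 1 ≤ k * (∑ i : Fin n, α i.castSucc) + α (Fin.last n) := by
      have hcast : ((k * (∑ i : Fin n, α i.castSucc) + α (Fin.last n) : ℕ) : ℝ)
          = RegAux.Adot k (expPt α) := by
        rw [RegAux.Adot_eq]
        push_cast
        rw [Finset.mul_sum]
        rfl
      have h2 : 2 * (k : ℝ) < ((k * (∑ i : Fin n, α i.castSucc) + α (Fin.last n) : ℕ) : ℝ) := by
        rw [hcast]
        exact hgt
      have h3 : 2 * k < k * (∑ i : Fin n, α i.castSucc) + α (Fin.last n) := by exact_mod_cast h2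
      omega
    have hex : ∃ j1 j2 : Fin (n + 1), ∀ i, RegAux.Vf n k j1 i + RegAux.Vf n k j2 i ≤ α i + α i := by
      by_cases h4 : 2 * k ≤ α (Fin.last n)
      · refine ⟨Fin.last n, Fin.last n, fun i => ?_⟩
        by_cases h : Fin.last n = i
        · rw [← h, RegAux.Vf_last_self]
          omega
        · rw [RegAux.Vf_apply_ne k h]
          omega
      · by_cases h1 : ∃ i : Fin n, 2 ≤ α i.castSucc
        · obtain ⟨i0, hi0⟩ := h1
          refine ⟨i0.castSucc, i0.castSucc, fun i => ?_⟩
          by_cases h : i0.castSucc = i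
          · rw [← h, RegAux.Vf_cs_self]
            omega
          · rw [RegAux.Vf_apply_ne k h]
            omega
        · by_cases h2 : ∃ i i' : Fin n, i ≠ i' ∧ 1 ≤ α i.castSucc ∧ 1 ≤ α i'.castSucc
          · obtain ⟨i0, i1, hne01, hi0, hi1⟩ := h2
            refine ⟨i0.castSucc, i1.castSucc, fun i => ?_⟩
            by_cases h : i0.castSucc = i
            · have hne' : i1.castSucc ≠ i := by
                rw [← h]
                intro hh
                exact hne01 (Fin.castSucc_injective n hh).symm
              rw [RegAux.Vf_apply_ne k hne', ← h, RegAux.Vf_cs_self]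
              omega
            · rw [RegAux.Vf_apply_ne k h]
              by_cases h' : i1.castSucc = i
              · rw [← h', RegAux.Vf_cs_self]
                omega
              · rw [RegAux.Vf_apply_ne k h']
                omega
          · by_cases h3 : ∃ i : Fin n, 1 ≤ α i.castSucc ∧ k ≤ α (Fin.last n)
            · obtain ⟨i0, hi0, hlast⟩ := h3
              refine ⟨i0.castSucc, Fin.last n, fun i => ?_⟩
              by_cases h : i0.castSucc = i
              · have hne' : Fin.last n ≠ i := by
                  rw [← h]
                  exact (Fin.castSucc_lt_last i0).ne'
                rw [RegAux.Vf_apply_ne k hne', ← h, RegAux.Vf_cs_self]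
                omega
              · rw [RegAux.Vf_apply_ne k h]
                by_cases h' : Fin.last n = i
                · rw [← h', RegAux.Vf_last_self]
                  omega
                · rw [RegAux.Vf_apply_ne k h']
                  omega
            · exfalso
              push_neg at h1 h2 h3 h4
              by_cases h5 : ∃ i : Fin n, 1 ≤ α i.castSucc
              · obtain ⟨i0, hi0⟩ := h5
                have hsum : (∑ i : Fin n, α i.castSucc) = α i0.castSucc := by
                  rw [Finset.sum_eq_single i0]
                  · intro b _ hb
                    have hb' := h2 b i0 hb
                    by_cases hb1 : 1 ≤ α b.castSucc
                    · have := hb' hb1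
                      omega
                    · omega
                  · intro h; exact absurd (Finset.mem_univ i0) h
                have h6 := h3 i0 hi0
                have h7 := h1 i0
                have h8 : α i0.castSucc = 1 := by omega
                rw [hsum, h8] at hnv
                omega
              · push_neg at h5
                have hsum : (∑ i : Fin n, α i.castSucc) = 0 :=
                  Finset.sum_eq_zero fun i _ => by have := h5 i; omega
                rw [hsum] at hnv
                omega
    obtain ⟨j1, j2, hj⟩ := hex
    obtain ⟨A1, hA1app⟩ : ∃ A1 : Fin (n + 1) →₀ ℕ,
        ∀ i, A1 i = α i + α i - RegAux.Vf n k j2 i :=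
      ⟨α + α - RegAux.Vf n k j2, fun i => by rw [Finsupp.tsub_apply, Finsupp.add_apply]⟩
    have hVle : ∀ i, RegAux.Vf n k j2 i ≤ α i + α i := fun i =>
      le_trans (Nat.le_add_left _ _) (hj i)
    have hsum12 : ∀ i, A1 i + RegAux.Vf n k j2 i = α i + α i := by
      intro i
      rw [hA1app i]
      have := hVle i
      omega
    have hA1ge : ∀ i, RegAux.Vf n k j1 i ≤ A1 i := by
      intro i
      rw [hA1app i]
      have := hj i
      omega
    have hA1even : ∀ i, Even (A1 i) := by
      intro i
      rw [hA1app i]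
      have h1 : Even (α i + α i) := ⟨α i, rfl⟩
      have h2 := RegAux.Vf_even k j2 i
      rw [Nat.even_sub (hVle i)]
      exact iff_of_true h1 h2
    have hVsuppg : ∀ j, RegAux.Vf n k j ∈ g.support := fun j =>
      mem_support_iff.mpr (hvertg j).ne'
    have hmemE : ∀ (B : Fin (n + 1) →₀ ℕ) (j : Fin (n + 1)),
        (∀ i, RegAux.Vf n k j i ≤ B i) → expPt B ∈ DeltaESet g := by
      intro B j hle
      exact ⟨RegAux.Vf n k j, hVsuppg j, fun i => RegAux.Vf_even k j i,
        fun i => by show ((RegAux.Vf n k j i : ℕ) : ℝ) ≤ ((B i : ℕ) : ℝ); exact_mod_cast hle i⟩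
    refine ⟨2, 1, ![A1, RegAux.Vf n k j2], fun _ _ => true, by norm_num, ?_, ?_, ?_,
      fun k' => ⟨0, rfl⟩, ?_⟩
    · intro s
      fin_cases s
      · simp only [Matrix.cons_val_zero]
        exact ⟨hmemE A1 j1 hA1ge, hA1even⟩
      · simp only [Matrix.cons_val_one, Matrix.head_cons]
        exact ⟨hmemE _ j2 (fun i => le_refl _), fun i => RegAux.Vf_even k j2 i⟩
    · intro s
      simp only [Fin.sum_univ_one]
      norm_num
    · rw [Fin.sum_univ_two]
      simp only [Fin.sum_univ_one]
      norm_num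
    · intro i
      have hsN : A1 i + RegAux.Vf n k j2 i = 2 * α i := by
        have := hsum12 i
        omega
      have hq : (A1 i : ℚ) + ((RegAux.Vf n k j2) i : ℚ) = 2 * (α i : ℚ) := by
        exact_mod_cast hsN
      rw [Fin.sum_univ_two]
      simp only [Fin.sum_univ_one, Matrix.cons_val_zero, Matrix.cons_val_one, Matrix.head_cons]
      rw [if_pos trivial]
      have hv0 : ((0 : Fin 1) : ℕ) = 0 := rfl
      rw [hv0]
      norm_num
      linarith

end
end
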